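/- arXiv:1206.0672 — 9 statements merged into one kernel-verified Lean document; each statement's English description precedes it below -/
import Mathlib

section
/- For natural numbers t, t', if there exist k₁, k₂ ∈ SL₂(R) with diag(ϖ^{-t'}, ϖ^{t'}) = k₁ · diag(ϖ^{-t}, ϖ^{t}) · k₂, then t = t' (the representatives α^t = diag(ϖ^{-t}, ϖ^{t}), t ≥ 0, lie in pairwise distinct double cosets of K\SL₂(k)/K). -/
lemma aux_le
    (R : Type*) [CommRing R] [IsDomain R]
    (k : Type*) [Field k] [Algebra R k] [IsFractionRing R k]
    (ϖ : R) (hϖ : Irreducible ϖ)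
    (t t' : ℕ)
    (h : ∃ (k₁ k₂ : Matrix.SpecialLinearGroup (Fin 2) R),
      Matrix.diagonal ![(algebraMap R k ϖ) ^ (-(t' : ℤ)), (algebraMap R k ϖ) ^ (t' : ℤ)] =
        ((k₁ : Matrix (Fin 2) (Fin 2) R).map (algebraMap R k)) *
          Matrix.diagonal ![(algebraMap R k ϖ) ^ (-(t : ℤ)), (algebraMap R k ϖ) ^ (t : ℤ)] *
          ((k₂ : Matrix (Fin 2) (Fin 2) R).map (algebraMap R k))) :
    t' ≤ t := by
  obtain ⟨k₁, k₂, h⟩ := h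
  by_contra hlt
  push_neg at hlt
  set f := algebraMap R k with hfdef
  have hf : Function.Injective f := IsFractionRing.injective R k
  have hϖ0 : f ϖ ≠ 0 := by
    intro h0
    exact hϖ.ne_zero (hf (by simpa using h0))
  have e := congrFun (congrFun h 0) 0
  simp [Matrix.mul_apply, Fin.sum_univ_succ, Matrix.diagonal] at e
  field_simp at e
  have eR : ϖ ^ t = ((k₁ : Matrix (Fin 2) (Fin 2) R) 0 0 * (k₂ : Matrix (Fin 2) (Fin 2) R) 0 0 + (k₁ : Matrix (Fin 2) (Fin 2) R) 0 1 * ϖ ^ t * (k₂ : Matrix (Fin 2) (Fin 2) R) 1 0 * ϖ ^ t) * ϖ ^ t' := by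
    apply hf
    simp only [map_mul, map_add, map_pow]
    linear_combination e
  have hsub : t' - t ≠ 0 := Nat.sub_ne_zero_of_lt hlt
  have hp : ϖ ^ t ≠ 0 := pow_ne_zero _ hϖ.ne_zero
  have e2 : (1 : R) = ((k₁ : Matrix (Fin 2) (Fin 2) R) 0 0 * (k₂ : Matrix (Fin 2) (Fin 2) R) 0 0 + (k₁ : Matrix (Fin 2) (Fin 2) R) 0 1 * ϖ ^ t * (k₂ : Matrix (Fin 2) (Fin 2) R) 1 0 * ϖ ^ t) * ϖ ^ (t' - t) := by
    apply mul_right_cancel₀ hp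
    rw [one_mul, mul_assoc, ← pow_add]
    have ht : t' - t + t = t' := by omega
    rw [ht]
    exact eR
  exact hϖ.not_isUnit ((isUnit_pow_iff hsub).mp (IsUnit.of_mul_eq_one _ (by rw [mul_comm]; exact e2.symm)))

/-- The Cartan representatives `α^t = diag(ϖ^{-t}, ϖ^{t})`, `t ≥ 0`, lie in pairwise
distinct double cosets of `K \ SL₂(k) / K`, where `K = SL₂(R)`. -/
theorem cartan_decomposition_SL2_unique
    (R : Type*) [CommRing R] [IsDomain R] [IsDiscreteValuationRing R]
    [IsAdicComplete (IsLocalRing.maximalIdeal R) R]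
    [Finite (IsLocalRing.ResidueField R)]
    (hodd : Odd (Nat.card (IsLocalRing.ResidueField R)))
    (k : Type*) [Field k] [Algebra R k] [IsFractionRing R k]
    (ϖ : R) (hϖ : Irreducible ϖ)
    (t t' : ℕ)
    (h : ∃ (k₁ k₂ : Matrix.SpecialLinearGroup (Fin 2) R),
      Matrix.diagonal ![(algebraMap R k ϖ) ^ (-(t' : ℤ)), (algebraMap R k ϖ) ^ (t' : ℤ)] =
        ((k₁ : Matrix (Fin 2) (Fin 2) R).map (algebraMap R k)) *
          Matrix.diagonal ![(algebraMap R k ϖ) ^ (-(t : ℤ)), (algebraMap R k ϖ) ^ (t : ℤ)] *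
          ((k₂ : Matrix (Fin 2) (Fin 2) R).map (algebraMap R k))) :
    t = t' := by
  have h1 : t' ≤ t := aux_le R k ϖ hϖ t t' h
  obtain ⟨k₁, k₂, hh⟩ := h
  have h2 : t ≤ t' := by
    apply aux_le R k ϖ hϖ t' t
    refine ⟨k₁⁻¹, k₂⁻¹, ?_⟩
    have e1 : ((k₁⁻¹ : Matrix.SpecialLinearGroup (Fin 2) R) : Matrix (Fin 2) (Fin 2) R).map
        (algebraMap R k) * ((k₁ : Matrix (Fin 2) (Fin 2) R).map (algebraMap R k)) = 1 := by
      rw [← Matrix.map_mul, ← Matrix.SpecialLinearGroup.coe_mul, inv_mul_cancel]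
      simp
    have e2 : ((k₂ : Matrix (Fin 2) (Fin 2) R).map (algebraMap R k)) *
        ((k₂⁻¹ : Matrix.SpecialLinearGroup (Fin 2) R) : Matrix (Fin 2) (Fin 2) R).map
        (algebraMap R k) = 1 := by
      rw [← Matrix.map_mul, ← Matrix.SpecialLinearGroup.coe_mul, mul_inv_cancel]
      simp
    rw [hh]
    simp only [← mul_assoc]
    rw [e1, one_mul, mul_assoc, e2, mul_one]
  omega
end

section
/- Let γ₁ ∈ R^× and γ₂ ∈ R be such that δ = γ₂γ₁^{-1} is not a square in k, and let T = { [[a, bγ₁],[bγ₂, a]] : a, b ∈ k, a² − b²γ₁γ₂ = 1 } ⊆ SL₂(k). Let B^op denote the subgroup of lower triangular matrices in SL₂(R). Then a matrix g = [[g₁₁,g₁₂],[g₂₁,g₂₂]] ∈ SL₂(R) lies in the double coset B^op · T if and only if g₁₁² − δ g₁₂² = u² for some unit u ∈ R^×. -/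
/-- Membership of the anisotropic torus `T = T_{γ₁,γ₂}` as a matrix over the fraction
field `k`: the matrices `[[a, bγ₁],[bγ₂, a]]` with `a² − b²γ₁γ₂ = 1`. -/
def InAnisotropicTorus (R k : Type*) [CommRing R] [Field k] [Algebra R k]
    (γ₁ γ₂ : R) (m : Matrix (Fin 2) (Fin 2) k) : Prop :=
  ∃ a b : k, a ^ 2 - b ^ 2 * algebraMap R k (γ₁ * γ₂) = 1 ∧
    m = !![a, b * algebraMap R k γ₁; b * algebraMap R k γ₂, a]

/-- A matrix `g ∈ SL₂(R)` lies in the double coset `B^op · T` (with `B^op` the lower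
triangular subgroup of `SL₂(R)` and `T = T_{γ₁,γ₂}` the anisotropic torus attached to the
nonsquare `δ = γ₂ γ₁^{-1}`) if and only if `g₁₁² − δ g₁₂²` is the square of a unit of `R`. -/
theorem mem_lowerTriangular_torus_doubleCoset_iff
    (R : Type*) [CommRing R] [IsDomain R] [IsDiscreteValuationRing R]
    [IsAdicComplete (IsLocalRing.maximalIdeal R) R]
    [Finite (IsLocalRing.ResidueField R)]
    (hodd : Odd (Nat.card (IsLocalRing.ResidueField R)))
    (k : Type*) [Field k] [Algebra R k] [IsFractionRing R k]
    (γ₁ : Rˣ) (γ₂ : R)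
    (hδ : ¬ ∃ x : k, x ^ 2 = algebraMap R k ((↑γ₁⁻¹ : R) * γ₂))
    (g : Matrix.SpecialLinearGroup (Fin 2) R) :
    (∃ b : Matrix.SpecialLinearGroup (Fin 2) R,
        (b : Matrix (Fin 2) (Fin 2) R) 0 1 = 0 ∧
        ∃ m : Matrix (Fin 2) (Fin 2) k, InAnisotropicTorus R k (↑γ₁) γ₂ m ∧
          ((g : Matrix (Fin 2) (Fin 2) R).map (algebraMap R k)) =
            ((b : Matrix (Fin 2) (Fin 2) R).map (algebraMap R k)) * m) ↔
    ∃ u : Rˣ, ((g : Matrix (Fin 2) (Fin 2) R) 0 0) ^ 2 -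
        ((↑γ₁⁻¹ : R) * γ₂) * ((g : Matrix (Fin 2) (Fin 2) R) 0 1) ^ 2 = (↑u : R) ^ 2 := by
  have hγ : (↑γ₁ : R) * ↑γ₁⁻¹ = 1 := γ₁.mul_inv
  constructor
  · rintro ⟨b, hb01, m, ⟨a, β, hab, rfl⟩, heq⟩
    have hdetb : (b : Matrix (Fin 2) (Fin 2) R).det = 1 := b.prop
    rw [Matrix.det_fin_two, hb01] at hdetb
    have hb : (b : Matrix (Fin 2) (Fin 2) R) 0 0 * (b : Matrix (Fin 2) (Fin 2) R) 1 1 = 1 := by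
      linear_combination hdetb
    have hent := Matrix.ext_iff.mpr heq
    have h00 : algebraMap R k ((g : Matrix (Fin 2) (Fin 2) R) 0 0) =
        algebraMap R k ((b : Matrix (Fin 2) (Fin 2) R) 0 0) * a := by
      have := hent 0 0
      simpa [Matrix.mul_apply, Fin.sum_univ_two, Matrix.map_apply, hb01] using this
    have h01 : algebraMap R k ((g : Matrix (Fin 2) (Fin 2) R) 0 1) =
        algebraMap R k ((b : Matrix (Fin 2) (Fin 2) R) 0 0) * (β * algebraMap R k ↑γ₁) := by
      have := hent 0 1
      simpa [Matrix.mul_apply, Fin.sum_univ_two, Matrix.map_apply, hb01] using this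
    rw [map_mul] at hab
    have hγk : algebraMap R k (↑γ₁ : R) * algebraMap R k (↑γ₁⁻¹ : R) = 1 := by
      rw [← map_mul, hγ, map_one]
    have hk : algebraMap R k ((g : Matrix (Fin 2) (Fin 2) R) 0 0 ^ 2 -
        ((↑γ₁⁻¹ : R) * γ₂) * (g : Matrix (Fin 2) (Fin 2) R) 0 1 ^ 2) =
        algebraMap R k ((b : Matrix (Fin 2) (Fin 2) R) 0 0 ^ 2) := by
      rw [map_sub, map_pow, map_mul, map_mul, map_pow, map_pow, h00, h01]
      linear_combination (algebraMap R k ((b : Matrix (Fin 2) (Fin 2) R) 0 0))^2 * hab -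
        (algebraMap R k ((b : Matrix (Fin 2) (Fin 2) R) 0 0))^2 * β^2 *
          algebraMap R k (↑γ₁ : R) * algebraMap R k γ₂ * hγk
    exact ⟨⟨(b : Matrix (Fin 2) (Fin 2) R) 0 0, (b : Matrix (Fin 2) (Fin 2) R) 1 1, hb,
      by rw [mul_comm]; exact hb⟩, IsFractionRing.injective R k hk⟩
  · rintro ⟨u, hu⟩
    have hdet : (g : Matrix (Fin 2) (Fin 2) R) 0 0 * (g : Matrix (Fin 2) (Fin 2) R) 1 1 -
        (g : Matrix (Fin 2) (Fin 2) R) 0 1 * (g : Matrix (Fin 2) (Fin 2) R) 1 0 = 1 := by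
      have := g.prop; rwa [Matrix.det_fin_two] at this
    have hui : (↑u : R) * ↑u⁻¹ = 1 := u.mul_inv
    set x := (g : Matrix (Fin 2) (Fin 2) R) 0 0 with hx
    set y := (g : Matrix (Fin 2) (Fin 2) R) 0 1 with hy
    set z := (g : Matrix (Fin 2) (Fin 2) R) 1 0 with hz
    set w := (g : Matrix (Fin 2) (Fin 2) R) 1 1 with hw
    set a₀ : R := ↑u⁻¹ * x with ha₀
    set b₀ : R := ↑u⁻¹ * (↑γ₁⁻¹ * y) with hb₀
    set B : Matrix (Fin 2) (Fin 2) R :=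
      !![(↑u : R), 0; ↑u⁻¹ * (z * x - (↑γ₁⁻¹ * γ₂) * (y * w)), ↑u⁻¹] with hB
    have hdetB : B.det = 1 := by
      rw [hB, Matrix.det_fin_two_of]; linear_combination hui
    have hBT : B * !![a₀, b₀ * ↑γ₁; b₀ * γ₂, a₀] = (g : Matrix (Fin 2) (Fin 2) R) := by
      refine Matrix.ext fun i j => ?_
      fin_cases i <;> fin_cases j <;>
        simp only [hB, Matrix.mul_apply, Fin.sum_univ_two, Matrix.cons_val_zero,
          Matrix.cons_val_one, Matrix.head_cons, Matrix.head_fin_const, Matrix.of_apply,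
          Matrix.cons_val', Matrix.empty_val', Matrix.cons_val_fin_one, Fin.mk_zero, Fin.mk_one,
          ← hx, ← hy, ← hz, ← hw]
      · linear_combination x * hui
      · linear_combination y * (↑u : R) * (↑u⁻¹ : R) * hγ + y * hui
      · linear_combination (↑u⁻¹ : R)^2 * z * hu -
          (↑u⁻¹ : R)^2 * ((↑γ₁⁻¹ : R) * γ₂) * y * hdet + z * ((↑u : R) * ↑u⁻¹ + 1) * hui
      · linear_combination ((↑u⁻¹ : R)^2 * z * x * y - (↑u⁻¹ : R)^2 *
            ((↑γ₁⁻¹ : R) * γ₂) * y^2 * w) * hγ + (↑u⁻¹ : R)^2 * w * hu -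
          (↑u⁻¹ : R)^2 * x * hdet + w * ((↑u : R) * ↑u⁻¹ + 1) * hui
    refine ⟨⟨B, hdetB⟩, by simp [hB], ?_⟩
    refine ⟨!![algebraMap R k a₀, algebraMap R k b₀ * algebraMap R k ↑γ₁;
        algebraMap R k b₀ * algebraMap R k γ₂, algebraMap R k a₀],
      ⟨algebraMap R k a₀, algebraMap R k b₀, ?_, rfl⟩, ?_⟩
    · have hR : a₀ ^ 2 - b₀ ^ 2 * ((↑γ₁ : R) * γ₂) = 1 := by
        linear_combination (↑u⁻¹ : R)^2 * hu -
          (↑u⁻¹ : R)^2 * (↑γ₁⁻¹ : R) * γ₂ * y^2 * hγ + ((↑u : R) * ↑u⁻¹ + 1) * hui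
      simp only [← map_pow, ← map_mul, ← map_sub, hR, map_one]
    · have hm : (!![algebraMap R k a₀, algebraMap R k b₀ * algebraMap R k ↑γ₁;
          algebraMap R k b₀ * algebraMap R k γ₂, algebraMap R k a₀] : Matrix (Fin 2) (Fin 2) k) =
          (!![a₀, b₀ * ↑γ₁; b₀ * γ₂, a₀] : Matrix (Fin 2) (Fin 2) R).map (algebraMap R k) := by
        refine Matrix.ext fun i j => ?_
        fin_cases i <;> fin_cases j <;> simp [Matrix.map_apply]
      rw [hm]
      show (g : Matrix (Fin 2) (Fin 2) R).map (algebraMap R k) =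
        B.map (algebraMap R k) * (!![a₀, b₀ * ↑γ₁; b₀ * γ₂, a₀]).map (algebraMap R k)
      rw [← Matrix.map_mul, hBT]
end

section
/- Let γ₁ ∈ R^× and γ₂ ∈ R with val(γ₂γ₁^{-1}) = 1 (the ramified case), let T = { [[a, bγ₁],[bγ₂, a]] : a, b ∈ k, a² − b²γ₁γ₂ = 1 } ⊆ SL₂(k), let B^op denote the subgroup of lower triangular matrices in SL₂(R), and let w = [[0,1],[−1,0]]. Then SL₂(R) is the disjoint union of the two double cosets B^op·T and B^op·w·T. -/
open IsLocalRing Polynomial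

section AuxSq
variable {R : Type*} [CommRing R] [IsDomain R] [IsDiscreteValuationRing R]
  [IsAdicComplete (IsLocalRing.maximalIdeal R) R]
  [Finite (IsLocalRing.ResidueField R)]

lemma aux_two_isUnit (hodd : Odd (Nat.card (ResidueField R))) : IsUnit (2 : R) := by
  rw [← IsLocalRing.notMem_maximalIdeal]
  intro h2
  have h2' : (2 : ResidueField R) = 0 := by
    have := (Ideal.Quotient.eq_zero_iff_mem (I := maximalIdeal R)).mpr h2
    rw [map_ofNat] at this
    exact this
  have : Fintype (ResidueField R) := Fintype.ofFinite _
  have hchar : (ringChar (ResidueField R) : ℕ) ∣ 2 := by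
    have := (CharP.cast_eq_zero_iff (ResidueField R) (ringChar (ResidueField R)) 2).mp
      (by exact_mod_cast h2')
    exact this
  have hprime : Nat.Prime (ringChar (ResidueField R)) :=
    CharP.char_is_prime (ResidueField R) _
  have hc2 : ringChar (ResidueField R) = 2 :=
    (Nat.prime_dvd_prime_iff_eq hprime Nat.prime_two).mp hchar
  obtain ⟨n, hp, hcard⟩ := FiniteField.card (ResidueField R) (ringChar (ResidueField R))
  rw [hc2] at hcard
  rw [Nat.card_eq_fintype_card, hcard] at hodd
  have h1 := Nat.odd_iff.mp hodd
  have h0 : 2 ^ (n : ℕ) % 2 = 0 := by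
    have := n.pos
    simp [Nat.pow_mod]
  omega

lemma aux_exists_unit_sq (hodd : Odd (Nat.card (ResidueField R))) (u : R)
    (hu : u - 1 ∈ maximalIdeal R) : ∃ x : Rˣ, (x : R) ^ 2 = u := by
  have h2 : IsUnit (2 : R) := aux_two_isUnit hodd
  have hmono : (X ^ 2 - C u : R[X]).Monic := monic_X_pow_sub_C u two_ne_zero
  have heval : (X ^ 2 - C u : R[X]).eval 1 ∈ maximalIdeal R := by
    simpa using (maximalIdeal R).neg_mem hu
  have h2r : (2 : ResidueField R) ≠ 0 := by
    intro h0
    have hmem : (2 : R) ∈ maximalIdeal R := by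
      have h0' : residue R 2 = 0 := by
        rw [show residue R (2:R) = (2 : ResidueField R) from map_ofNat _ 2]
        exact h0
      exact (Ideal.Quotient.eq_zero_iff_mem).mp h0'
    exact (IsLocalRing.notMem_maximalIdeal.mpr h2) hmem
  have hderiv : IsUnit (Ideal.Quotient.mk (maximalIdeal R)
      ((X ^ 2 - C u : R[X]).derivative.eval 1)) := by
    have : (X ^ 2 - C u : R[X]).derivative.eval 1 = 2 := by simp [one_add_one_eq_two]
    rw [this]
    exact isUnit_iff_ne_zero.mpr (by exact_mod_cast h2r)
  obtain ⟨a, ha, ha'⟩ := HenselianRing.is_henselian (I := maximalIdeal R)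
    (X ^ 2 - C u) hmono 1 heval hderiv
  have hroot : a ^ 2 = u := by
    have := ha
    simp only [IsRoot, eval_sub, eval_pow, eval_X, eval_C, sub_eq_zero] at this
    exact this
  have haunit : IsUnit a := by
    rw [← IsLocalRing.notMem_maximalIdeal]
    intro hma
    exact (maximalIdeal R).ne_top_iff_one.mp (Ideal.IsMaximal.ne_top inferInstance)
      (by simpa using (maximalIdeal R).sub_mem hma ha')
  exact ⟨haunit.unit, by simpa [haunit.unit_spec] using hroot⟩

end AuxSq


/-- In the ramified case (`val(γ₂γ₁^{-1}) = 1`), `SL₂(R)` is the disjoint union of the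
two double cosets `B^op · T` and `B^op · w · T`, where `B^op` is the lower triangular
subgroup of `SL₂(R)` and `w = [[0,1],[-1,0]]`. -/
theorem lowerTriangular_torus_doubleCosets_ramified
    (R : Type*) [CommRing R] [IsDomain R] [IsDiscreteValuationRing R]
    [IsAdicComplete (IsLocalRing.maximalIdeal R) R]
    [Finite (IsLocalRing.ResidueField R)]
    (hodd : Odd (Nat.card (IsLocalRing.ResidueField R)))
    (k : Type*) [Field k] [Algebra R k] [IsFractionRing R k]
    (γ₁ : Rˣ) (γ₂ : R)
    (hram : Irreducible ((↑γ₁⁻¹ : R) * γ₂)) :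
    (∀ g : Matrix.SpecialLinearGroup (Fin 2) R,
      (∃ b : Matrix.SpecialLinearGroup (Fin 2) R,
        (b : Matrix (Fin 2) (Fin 2) R) 0 1 = 0 ∧
        ∃ m : Matrix (Fin 2) (Fin 2) k, InAnisotropicTorus R k (↑γ₁) γ₂ m ∧
          ((g : Matrix (Fin 2) (Fin 2) R).map (algebraMap R k)) =
            ((b : Matrix (Fin 2) (Fin 2) R).map (algebraMap R k)) * m) ∨
      (∃ b : Matrix.SpecialLinearGroup (Fin 2) R,
        (b : Matrix (Fin 2) (Fin 2) R) 0 1 = 0 ∧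
        ∃ m : Matrix (Fin 2) (Fin 2) k, InAnisotropicTorus R k (↑γ₁) γ₂ m ∧
          ((g : Matrix (Fin 2) (Fin 2) R).map (algebraMap R k)) =
            ((b : Matrix (Fin 2) (Fin 2) R).map (algebraMap R k)) *
              (!![0, 1; -1, 0] : Matrix (Fin 2) (Fin 2) k) * m)) ∧
    (∀ g : Matrix.SpecialLinearGroup (Fin 2) R,
      ¬ ((∃ b : Matrix.SpecialLinearGroup (Fin 2) R,
        (b : Matrix (Fin 2) (Fin 2) R) 0 1 = 0 ∧
        ∃ m : Matrix (Fin 2) (Fin 2) k, InAnisotropicTorus R k (↑γ₁) γ₂ m ∧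
          ((g : Matrix (Fin 2) (Fin 2) R).map (algebraMap R k)) =
            ((b : Matrix (Fin 2) (Fin 2) R).map (algebraMap R k)) * m) ∧
      (∃ b : Matrix.SpecialLinearGroup (Fin 2) R,
        (b : Matrix (Fin 2) (Fin 2) R) 0 1 = 0 ∧
        ∃ m : Matrix (Fin 2) (Fin 2) k, InAnisotropicTorus R k (↑γ₁) γ₂ m ∧
          ((g : Matrix (Fin 2) (Fin 2) R).map (algebraMap R k)) =
            ((b : Matrix (Fin 2) (Fin 2) R).map (algebraMap R k)) *
              (!![0, 1; -1, 0] : Matrix (Fin 2) (Fin 2) k) * m))) := by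
  constructor
  · intro g
    have hγi : (↑γ₁ : R) * ↑γ₁⁻¹ = 1 := Units.mul_inv γ₁
    have hmax : maximalIdeal R = Ideal.span {(↑γ₁⁻¹ : R) * γ₂} := hram.maximalIdeal_eq
    set φ := algebraMap R k with hφ
    set A := (↑g : Matrix (Fin 2) (Fin 2) R) 0 0 with hA_def
    set B := (↑g : Matrix (Fin 2) (Fin 2) R) 0 1 with hB_def
    set C := (↑g : Matrix (Fin 2) (Fin 2) R) 1 0 with hC_def
    set D := (↑g : Matrix (Fin 2) (Fin 2) R) 1 1 with hD_def
    have hdet : A * D - B * C = 1 := by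
      rw [hA_def, hB_def, hC_def, hD_def, ← Matrix.det_fin_two]
      exact g.property
    have hgeta : (↑g : Matrix (Fin 2) (Fin 2) R) = !![A, B; C, D] := Matrix.eta_fin_two _
    by_cases hA : A ∈ maximalIdeal R
    · -- second coset
      right
      rw [hmax, Ideal.mem_span_singleton] at hA
      obtain ⟨r, hr⟩ := hA
      have hB : IsUnit B := by
        rw [← IsLocalRing.notMem_maximalIdeal]
        intro hBm
        have hAm : A ∈ maximalIdeal R := by
          rw [hmax, Ideal.mem_span_singleton]; exact ⟨r, hr⟩
        have h1 : (1 : R) ∈ maximalIdeal R := by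
          rw [← hdet]
          exact Ideal.sub_mem _ (Ideal.mul_mem_right _ _ hAm) (Ideal.mul_mem_right _ _ hBm)
        exact (maximalIdeal R).ne_top_iff_one.mp (Ideal.IsMaximal.ne_top inferInstance) h1
      obtain ⟨Bu, hBu⟩ := hB
      have hu : (1 - r ^ 2 * ((↑γ₁⁻¹ : R) * γ₂) * (↑Bu⁻¹ : R) ^ 2) - 1 ∈ maximalIdeal R := by
        rw [hmax, Ideal.mem_span_singleton]
        exact ⟨-(r ^ 2 * (↑Bu⁻¹ : R) ^ 2), by ring⟩
      obtain ⟨x, hx⟩ := aux_exists_unit_sq hodd _ hu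
      set X := Bu * x with hX_def
      have hXval : (↑X : R) = ↑Bu * ↑x := rfl
      have hXi : (↑X : R) * ↑X⁻¹ = 1 := Units.mul_inv X
      have hBui : (↑Bu : R) * ↑Bu⁻¹ = 1 := Units.mul_inv Bu
      have hX2 : (↑X : R) ^ 2 = B ^ 2 - r ^ 2 * ((↑γ₁⁻¹ : R) * γ₂) := by
        rw [hXval]
        linear_combination (↑Bu : R) ^ 2 * hx + ((↑Bu : R) + B) * hBu -
          r ^ 2 * ((↑γ₁⁻¹ : R) * γ₂) * ((↑Bu : R) * ↑Bu⁻¹ + 1) * hBui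
      set y : R := (↑X⁻¹ : R) * (D * B - C * r) with hy_def
      have hbdet : (!![(↑X : R), 0; y, ↑X⁻¹]).det = 1 := by
        rw [Matrix.det_fin_two_of]; simpa using hXi
      set t0 : Matrix (Fin 2) (Fin 2) R :=
        !![B * ↑X⁻¹, (r * ↑γ₁⁻¹ * ↑X⁻¹) * ↑γ₁; (r * ↑γ₁⁻¹ * ↑X⁻¹) * γ₂, B * ↑X⁻¹] with ht0
      have hg : (↑g : Matrix (Fin 2) (Fin 2) R) =
          !![(↑X : R), 0; y, ↑X⁻¹] * !![0, 1; -1, 0] * t0 := by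
        rw [hgeta, ht0, hy_def]
        ext i j
        fin_cases i <;> fin_cases j <;>
          simp [Matrix.mul_apply, Fin.sum_univ_two]
        · linear_combination hr - r * (↑γ₁⁻¹ : R) * γ₂ * hXi
        · linear_combination -B * hXi
        · linear_combination -C * ((↑X : R) * ↑X⁻¹ + 1) * hXi + C * (↑X⁻¹ : R) ^ 2 * hX2 -
            (↑X⁻¹ : R) ^ 2 * B * hdet + (↑X⁻¹ : R) ^ 2 * B * D * hr
        · linear_combination -D * ((↑X : R) * ↑X⁻¹ + 1) * hXi + D * (↑X⁻¹ : R) ^ 2 * hX2 -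
            (↑X⁻¹ : R) ^ 2 * r * hdet + (↑X⁻¹ : R) ^ 2 * r * D * hr + (↑X⁻¹ : R) ^ 2 * r * hγi
      have hnR : (B * ↑X⁻¹) ^ 2 - (r * ↑γ₁⁻¹ * ↑X⁻¹) ^ 2 * ((↑γ₁ : R) * γ₂) = 1 := by
        linear_combination ((↑X : R) * ↑X⁻¹ + 1) * hXi - (↑X⁻¹ : R) ^ 2 * hX2 -
          (↑X⁻¹ : R) ^ 2 * r ^ 2 * (↑γ₁⁻¹ : R) * γ₂ * hγi
      refine ⟨⟨!![(↑X : R), 0; y, ↑X⁻¹], hbdet⟩, by simp, t0.map φ,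
        ⟨φ (B * ↑X⁻¹), φ (r * ↑γ₁⁻¹ * ↑X⁻¹), ?_, ?_⟩, ?_⟩
      · rw [← map_pow, ← map_pow, ← map_mul, ← map_sub, hnR, map_one]
      · rw [ht0]
        ext i j
        fin_cases i <;> fin_cases j <;> simp [Matrix.map_apply, map_mul, hφ]
      · have hW : ((!![0, 1; -1, 0] : Matrix (Fin 2) (Fin 2) R)).map ⇑φ =
            (!![0, 1; -1, 0] : Matrix (Fin 2) (Fin 2) k) := by
          ext i j
          fin_cases i <;> fin_cases j <;> simp
        rw [hg, Matrix.map_mul, Matrix.map_mul, hW]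
    · -- first coset
      left
      have hAu : IsUnit A := IsLocalRing.notMem_maximalIdeal.mp hA
      obtain ⟨Au, hAu'⟩ := hAu
      have hu : (1 - B ^ 2 * ((↑γ₁⁻¹ : R) * γ₂) * (↑Au⁻¹ : R) ^ 2) - 1 ∈ maximalIdeal R := by
        rw [hmax, Ideal.mem_span_singleton]
        exact ⟨-(B ^ 2 * (↑Au⁻¹ : R) ^ 2), by ring⟩
      obtain ⟨x, hx⟩ := aux_exists_unit_sq hodd _ hu
      set X := Au * x with hX_def
      have hXval : (↑X : R) = ↑Au * ↑x := rfl
      have hXi : (↑X : R) * ↑X⁻¹ = 1 := Units.mul_inv X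
      have hAui : (↑Au : R) * ↑Au⁻¹ = 1 := Units.mul_inv Au
      have hX2 : (↑X : R) ^ 2 = A ^ 2 - B ^ 2 * ((↑γ₁⁻¹ : R) * γ₂) := by
        rw [hXval]
        linear_combination (↑Au : R) ^ 2 * hx + ((↑Au : R) + A) * hAu' -
          B ^ 2 * ((↑γ₁⁻¹ : R) * γ₂) * ((↑Au : R) * ↑Au⁻¹ + 1) * hAui
      set y : R := (↑X⁻¹ : R) * (C * A - D * B * ((↑γ₁⁻¹ : R) * γ₂)) with hy_def
      have hbdet : (!![(↑X : R), 0; y, ↑X⁻¹]).det = 1 := by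
        rw [Matrix.det_fin_two_of]; simpa using hXi
      set t0 : Matrix (Fin 2) (Fin 2) R :=
        !![A * ↑X⁻¹, (B * ↑X⁻¹ * ↑γ₁⁻¹) * ↑γ₁; (B * ↑X⁻¹ * ↑γ₁⁻¹) * γ₂, A * ↑X⁻¹] with ht0
      have hg : (↑g : Matrix (Fin 2) (Fin 2) R) = !![(↑X : R), 0; y, ↑X⁻¹] * t0 := by
        rw [hgeta, ht0, hy_def]
        ext i j
        fin_cases i <;> fin_cases j <;>
          simp [Matrix.mul_apply, Fin.sum_univ_two]
        · linear_combination -A * hXi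
        · linear_combination -B * hXi
        · linear_combination -C * ((↑X : R) * ↑X⁻¹ + 1) * hXi + C * (↑X⁻¹ : R) ^ 2 * hX2 +
            (↑X⁻¹ : R) ^ 2 * (↑γ₁⁻¹ : R) * γ₂ * B * hdet
        · linear_combination -D * ((↑X : R) * ↑X⁻¹ + 1) * hXi + D * (↑X⁻¹ : R) ^ 2 * hX2 +
            (↑X⁻¹ : R) ^ 2 * A * hdet
      have hnR : (A * ↑X⁻¹) ^ 2 - (B * ↑X⁻¹ * ↑γ₁⁻¹) ^ 2 * ((↑γ₁ : R) * γ₂) = 1 := by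
        linear_combination ((↑X : R) * ↑X⁻¹ + 1) * hXi - (↑X⁻¹ : R) ^ 2 * hX2 -
          B ^ 2 * (↑X⁻¹ : R) ^ 2 * (↑γ₁⁻¹ : R) * γ₂ * hγi
      refine ⟨⟨!![(↑X : R), 0; y, ↑X⁻¹], hbdet⟩, by simp, t0.map φ,
        ⟨φ (A * ↑X⁻¹), φ (B * ↑X⁻¹ * ↑γ₁⁻¹), ?_, ?_⟩, ?_⟩
      · rw [← map_pow, ← map_pow, ← map_mul, ← map_sub, hnR, map_one]
      · have hne : φ (↑γ₁ : R) ≠ 0 := (γ₁.isUnit.map φ).ne_zero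
        have hXne : φ (↑X : R) ≠ 0 := (X.isUnit.map φ).ne_zero
        rw [ht0]
        ext i j
        fin_cases i <;> fin_cases j <;>
          simp only [← hφ, Matrix.map_apply, map_mul] <;>
          simp [Matrix.map_apply, map_mul] <;>
          field_simp <;> ring
      · rw [hg, Matrix.map_mul]
  · intro g
    have hγi : (↑γ₁ : R) * ↑γ₁⁻¹ = 1 := Units.mul_inv γ₁
    set φ := algebraMap R k with hφ
    rintro ⟨⟨b1, hb1, m1, ⟨a1, c1, hn1, rfl⟩, he1⟩, ⟨b2, hb2, m2, ⟨a2, c2, hn2, rfl⟩, he2⟩⟩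
    have hd1 : (↑b1 : Matrix (Fin 2) (Fin 2) R) 0 0 * (↑b1 : Matrix (Fin 2) (Fin 2) R) 1 1 = 1 := by
      have := b1.property
      rw [Matrix.det_fin_two, hb1] at this
      simpa using this
    have e1 := congrFun (congrFun he1 0) 0
    have e2 := congrFun (congrFun he1 0) 1
    have e3 := congrFun (congrFun he2 0) 0
    have e4 := congrFun (congrFun he2 0) 1
    simp [Matrix.mul_apply, Fin.sum_univ_two, hb1, hb2] at e1 e2 e3 e4
    rw [map_mul] at hn1 hn2
    have key : φ ((↑b1 : Matrix (Fin 2) (Fin 2) R) 0 0) ^ 2 * φ (↑γ₁ : R) +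
        φ ((↑b2 : Matrix (Fin 2) (Fin 2) R) 0 0) ^ 2 * φ γ₂ = 0 := by
      linear_combination
        (-(φ (↑γ₁ : R) * (φ ((↑g : Matrix (Fin 2) (Fin 2) R) 0 0) +
          φ ((↑b1 : Matrix (Fin 2) (Fin 2) R) 0 0) * a1))) * e1 +
        φ γ₂ * (φ ((↑g : Matrix (Fin 2) (Fin 2) R) 0 1) +
          φ ((↑b1 : Matrix (Fin 2) (Fin 2) R) 0 0) * c1 * φ (↑γ₁ : R)) * e2 -
        φ ((↑b1 : Matrix (Fin 2) (Fin 2) R) 0 0) ^ 2 * φ (↑γ₁ : R) * hn1 +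
        φ (↑γ₁ : R) * (φ ((↑g : Matrix (Fin 2) (Fin 2) R) 0 0) +
          φ ((↑b2 : Matrix (Fin 2) (Fin 2) R) 0 0) * c2 * φ γ₂) * e3 -
        φ γ₂ * (φ ((↑g : Matrix (Fin 2) (Fin 2) R) 0 1) +
          φ ((↑b2 : Matrix (Fin 2) (Fin 2) R) 0 0) * a2) * e4 -
        φ γ₂ * φ ((↑b2 : Matrix (Fin 2) (Fin 2) R) 0 0) ^ 2 * hn2
    have keyR : ((↑b1 : Matrix (Fin 2) (Fin 2) R) 0 0) ^ 2 * ↑γ₁ +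
        ((↑b2 : Matrix (Fin 2) (Fin 2) R) 0 0) ^ 2 * γ₂ = 0 := by
      apply IsFractionRing.injective R k
      rw [map_zero, map_add, map_mul, map_mul, map_pow, map_pow]
      exact key
    have hfin : ((↑b1 : Matrix (Fin 2) (Fin 2) R) 0 0) ^ 2 =
        ((↑γ₁⁻¹ : R) * γ₂) * (-((↑b2 : Matrix (Fin 2) (Fin 2) R) 0 0) ^ 2) := by
      linear_combination (↑γ₁⁻¹ : R) * keyR - ((↑b1 : Matrix (Fin 2) (Fin 2) R) 0 0) ^ 2 * hγi
    have hunit : IsUnit (((↑b1 : Matrix (Fin 2) (Fin 2) R) 0 0) ^ 2) :=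
      (IsUnit.of_mul_eq_one _ hd1).pow 2
    exact hram.not_isUnit
      (isUnit_of_dvd_unit ⟨-((↑b2 : Matrix (Fin 2) (Fin 2) R) 0 0) ^ 2, hfin⟩ hunit)
end

section
/- Let ε ∈ R^× be a unit whose image in the residue field κ is not a square, let T = { [[a, b],[bε, a]] : a, b ∈ k, a² − εb² = 1 } ⊆ SL₂(k), and let B^op denote the subgroup of lower triangular matrices in SL₂(R). Suppose x, y ∈ R satisfy x² − εy² = ε, and set e = [[x, y],[y, ε^{-1}x]] (which lies in SL₂(R)). Then SL₂(R) is the disjoint union of the two double cosets B^op·T and B^op·e·T. -/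
/-- Membership of the unramified anisotropic torus `T = T_{1,ε}` as a matrix over the
fraction field `k`: the matrices `[[a, b],[bε, a]]` with `a² − εb² = 1`. -/
def InUnramifiedTorus (R k : Type*) [CommRing R] [Field k] [Algebra R k]
    (ε : R) (m : Matrix (Fin 2) (Fin 2) k) : Prop :=
  ∃ a b : k, a ^ 2 - algebraMap R k ε * b ^ 2 = 1 ∧
    m = !![a, b; b * algebraMap R k ε, a]

open Polynomial in
private lemma sq_lift_of_unit {R : Type*} [CommRing R] [IsLocalRing R]
    [IsAdicComplete (IsLocalRing.maximalIdeal R) R]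
    (h2 : (2 : IsLocalRing.ResidueField R) ≠ 0)
    {d : R} (hd : IsUnit d) (hs : IsSquare (IsLocalRing.residue R d)) :
    ∃ u : R, IsUnit u ∧ u * u = d := by
  obtain ⟨t, ht⟩ := hs
  obtain ⟨a₀, rfl⟩ := IsLocalRing.residue_surjective (R := R) t
  have htne : IsLocalRing.residue R a₀ ≠ 0 := by
    intro h0
    have := hd.map (IsLocalRing.residue R)
    rw [ht, h0, mul_zero] at this
    exact this.ne_zero rfl
  have hmem : (X ^ 2 - C d).eval a₀ ∈ IsLocalRing.maximalIdeal R := by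
    have : IsLocalRing.residue R ((X ^ 2 - C d).eval a₀) = 0 := by
      simp only [eval_sub, eval_pow, eval_X, eval_C, map_sub, map_pow, ht]
      ring
    exact Ideal.Quotient.eq_zero_iff_mem.mp this
  have hder : IsUnit (Ideal.Quotient.mk (IsLocalRing.maximalIdeal R)
      ((X ^ 2 - C d).derivative.eval a₀)) := by
    show IsUnit (IsLocalRing.residue R ((X ^ 2 - C d).derivative.eval a₀))
    have h3 : (X ^ 2 - C d).derivative.eval a₀ = 2 * a₀ := by
      simp [derivative_sub, derivative_X_pow]
      ring
    rw [h3, map_mul]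
    have h4 : (IsLocalRing.residue R 2 : IsLocalRing.ResidueField R) = 2 :=
      map_ofNat (IsLocalRing.residue R) 2
    rw [h4]
    exact (mul_ne_zero h2 htne).isUnit
  obtain ⟨a, ha, -⟩ := HenselianRing.is_henselian (I := IsLocalRing.maximalIdeal R)
    (X ^ 2 - C d) (monic_X_pow_sub_C d (by norm_num)) a₀ hmem hder
  have haa : a * a = d := by
    have := ha
    simp only [Polynomial.IsRoot, eval_sub, eval_pow, eval_X, eval_C, sub_eq_zero] at this
    rw [← this]; ring
  exact ⟨a, isUnit_of_mul_isUnit_left (haa ▸ hd), haa⟩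

private lemma isSquare_mul_of_not_of_not {F : Type*} [Field F] [Fintype F] [DecidableEq F]
    {a b : F} (ha : ¬ IsSquare a) (hb : ¬ IsSquare b) :
    IsSquare (a * b) := by
  have ha0 : a ≠ 0 := fun h => ha (h ▸ ⟨0, by simp⟩)
  have hb0 : b ≠ 0 := fun h => hb (h ▸ ⟨0, by simp⟩)
  have h1 := quadraticChar_neg_one_iff_not_isSquare.mpr ha
  have h2 := quadraticChar_neg_one_iff_not_isSquare.mpr hb
  have hmul : quadraticChar F (a * b) = 1 := by rw [map_mul, h1, h2]; ring
  exact (quadraticChar_one_iff_isSquare (mul_ne_zero ha0 hb0)).mp hmul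

private lemma decomp_2x2 {k : Type*} [Field k] (U : k) (hU : U ≠ 0)
    (h g : Matrix (Fin 2) (Fin 2) k)
    (hh : h 0 0 * h 1 1 - h 0 1 * h 1 0 = 1)
    (hg : g 0 0 * g 1 1 - g 0 1 * g 1 0 = 1)
    (e00 : g 0 0 = U * h 0 0) (e01 : g 0 1 = U * h 0 1) :
    g = !![U, 0; h 1 1 * g 1 0 - h 1 0 * g 1 1, U⁻¹] * h := by
  have key : U * h 0 0 * g 1 1 - U * h 0 1 * g 1 0 = 1 := by
    rw [← e00, ← e01]; exact hg
  have hUi : U * U⁻¹ = 1 := mul_inv_cancel₀ hU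
  ext i j
  fin_cases i <;> fin_cases j <;> simp [Matrix.mul_apply, Fin.sum_univ_two]
  · linear_combination e00
  · linear_combination e01
  · linear_combination (-(g 1 0)) * hh + h 1 0 * U⁻¹ * key -
      h 1 0 * (h 0 0 * g 1 1 - h 0 1 * g 1 0) * hUi
  · linear_combination (-(g 1 1)) * hh + h 1 1 * U⁻¹ * key -
      h 1 1 * (h 0 0 * g 1 1 - h 0 1 * g 1 0) * hUi


private lemma coset1_key {R k : Type*} [CommRing R] [Field k] [Algebra R k]
    (hinj : Function.Injective (algebraMap R k)) (ε : R)
    (g b : Matrix (Fin 2) (Fin 2) R) (hb : b 0 1 = 0)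
    (m : Matrix (Fin 2) (Fin 2) k) (hm : InUnramifiedTorus R k ε m)
    (heq : g.map (algebraMap R k) = b.map (algebraMap R k) * m) :
    g 0 0 ^ 2 - ε * g 0 1 ^ 2 = b 0 0 ^ 2 := by
  obtain ⟨A, B, htor, rfl⟩ := hm
  set φ := algebraMap R k
  have h00 : φ (g 0 0) = φ (b 0 0) * A := by
    have : g.map φ 0 0 = (b.map φ * !![A, B; B * φ ε, A]) 0 0 := by rw [heq]
    simpa [Matrix.mul_apply, Fin.sum_univ_two, hb] using this
  have h01 : φ (g 0 1) = φ (b 0 0) * B := by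
    have : g.map φ 0 1 = (b.map φ * !![A, B; B * φ ε, A]) 0 1 := by rw [heq]
    simpa [Matrix.mul_apply, Fin.sum_univ_two, hb] using this
  apply hinj
  rw [map_sub, map_mul, map_pow, map_pow, map_pow]
  linear_combination (φ (g 0 0) + φ (b 0 0) * A) * h00 -
    φ ε * (φ (g 0 1) + φ (b 0 0) * B) * h01 + φ (b 0 0) ^ 2 * htor

private lemma coset2_key {R k : Type*} [CommRing R] [Field k] [Algebra R k]
    (hinj : Function.Injective (algebraMap R k)) (ε x y exy : R)
    (hxy : x ^ 2 - ε * y ^ 2 = ε)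
    (g b : Matrix (Fin 2) (Fin 2) R) (hb : b 0 1 = 0)
    (m : Matrix (Fin 2) (Fin 2) k) (hm : InUnramifiedTorus R k ε m)
    (heq : g.map (algebraMap R k) =
      b.map (algebraMap R k) * (!![x, y; y, exy] : Matrix (Fin 2) (Fin 2) R).map (algebraMap R k)
        * m) :
    g 0 0 ^ 2 - ε * g 0 1 ^ 2 = b 0 0 ^ 2 * ε := by
  obtain ⟨A, B, htor, rfl⟩ := hm
  set φ := algebraMap R k
  have hXY : φ x ^ 2 - φ ε * φ y ^ 2 = φ ε := by
    rw [← map_pow, ← map_pow, ← map_mul, ← map_sub]; exact congrArg φ hxy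
  have h00 : φ (g 0 0) = φ (b 0 0) * (φ x * A + φ y * (B * φ ε)) := by
    have : g.map φ 0 0 =
        (b.map φ * (!![x, y; y, exy]).map φ * !![A, B; B * φ ε, A]) 0 0 := by rw [heq]
    simpa [Matrix.mul_apply, Fin.sum_univ_two, hb, add_mul, mul_add, mul_assoc, mul_comm,
      mul_left_comm] using this
  have h01 : φ (g 0 1) = φ (b 0 0) * (φ x * B + φ y * A) := by
    have : g.map φ 0 1 =
        (b.map φ * (!![x, y; y, exy]).map φ * !![A, B; B * φ ε, A]) 0 1 := by rw [heq]
    simpa [Matrix.mul_apply, Fin.sum_univ_two, hb, add_mul, mul_add, mul_assoc, mul_comm,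
      mul_left_comm] using this
  apply hinj
  rw [map_sub, map_mul, map_mul, map_pow, map_pow, map_pow]
  linear_combination (φ (g 0 0) + φ (b 0 0) * (φ x * A + φ y * (B * φ ε))) * h00 -
    φ ε * (φ (g 0 1) + φ (b 0 0) * (φ x * B + φ y * A)) * h01 +
    φ (b 0 0) ^ 2 * (A ^ 2 - φ ε * B ^ 2) * hXY + φ (b 0 0) ^ 2 * φ ε * htor

/-- In the unramified case (`ε` a unit whose image in the residue field is a nonsquare),
with `e = [[x,y],[y,ε^{-1}x]]` for a solution of `x² − εy² = ε` (so `e ∈ SL₂(R)`),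
`SL₂(R)` is the disjoint union of the two double cosets `B^op · T` and `B^op · e · T`. -/
theorem lowerTriangular_torus_doubleCosets_unramified
    (R : Type*) [CommRing R] [IsDomain R] [IsDiscreteValuationRing R]
    [IsAdicComplete (IsLocalRing.maximalIdeal R) R]
    [Finite (IsLocalRing.ResidueField R)]
    (hodd : Odd (Nat.card (IsLocalRing.ResidueField R)))
    (k : Type*) [Field k] [Algebra R k] [IsFractionRing R k]
    (ε : Rˣ) (hε : ¬ IsSquare (IsLocalRing.residue R (↑ε : R)))
    (x y : R) (hxy : x ^ 2 - (↑ε : R) * y ^ 2 = (↑ε : R)) :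
    (!![x, y; y, (↑ε⁻¹ : R) * x] : Matrix (Fin 2) (Fin 2) R).det = 1 ∧
    (∀ g : Matrix.SpecialLinearGroup (Fin 2) R,
      (∃ b : Matrix.SpecialLinearGroup (Fin 2) R,
        (b : Matrix (Fin 2) (Fin 2) R) 0 1 = 0 ∧
        ∃ m : Matrix (Fin 2) (Fin 2) k, InUnramifiedTorus R k (↑ε) m ∧
          ((g : Matrix (Fin 2) (Fin 2) R).map (algebraMap R k)) =
            ((b : Matrix (Fin 2) (Fin 2) R).map (algebraMap R k)) * m) ∨
      (∃ b : Matrix.SpecialLinearGroup (Fin 2) R,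
        (b : Matrix (Fin 2) (Fin 2) R) 0 1 = 0 ∧
        ∃ m : Matrix (Fin 2) (Fin 2) k, InUnramifiedTorus R k (↑ε) m ∧
          ((g : Matrix (Fin 2) (Fin 2) R).map (algebraMap R k)) =
            ((b : Matrix (Fin 2) (Fin 2) R).map (algebraMap R k)) *
              ((!![x, y; y, (↑ε⁻¹ : R) * x] : Matrix (Fin 2) (Fin 2) R).map (algebraMap R k)) *
              m)) ∧
    (∀ g : Matrix.SpecialLinearGroup (Fin 2) R,
      ¬ ((∃ b : Matrix.SpecialLinearGroup (Fin 2) R,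
        (b : Matrix (Fin 2) (Fin 2) R) 0 1 = 0 ∧
        ∃ m : Matrix (Fin 2) (Fin 2) k, InUnramifiedTorus R k (↑ε) m ∧
          ((g : Matrix (Fin 2) (Fin 2) R).map (algebraMap R k)) =
            ((b : Matrix (Fin 2) (Fin 2) R).map (algebraMap R k)) * m) ∧
      (∃ b : Matrix.SpecialLinearGroup (Fin 2) R,
        (b : Matrix (Fin 2) (Fin 2) R) 0 1 = 0 ∧
        ∃ m : Matrix (Fin 2) (Fin 2) k, InUnramifiedTorus R k (↑ε) m ∧
          ((g : Matrix (Fin 2) (Fin 2) R).map (algebraMap R k)) =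
            ((b : Matrix (Fin 2) (Fin 2) R).map (algebraMap R k)) *
              ((!![x, y; y, (↑ε⁻¹ : R) * x] : Matrix (Fin 2) (Fin 2) R).map (algebraMap R k)) *
              m))) := by
  classical
  have hεi : (↑ε : R) * (↑ε⁻¹ : R) = 1 := ε.mul_inv
  have hdetE : (!![x, y; y, (↑ε⁻¹ : R) * x] : Matrix (Fin 2) (Fin 2) R).det = 1 := by
    rw [Matrix.det_fin_two_of]
    linear_combination (↑ε⁻¹ : R) * hxy + (y ^ 2 + 1) * hεi
  set κ := IsLocalRing.ResidueField R
  letI : Fintype κ := Fintype.ofFinite κ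
  set res := IsLocalRing.residue R with hres_def
  have hchar : ringChar κ ≠ 2 := by
    intro h
    have h1 := FiniteField.even_card_of_char_two (F := κ) h
    rw [← Nat.card_eq_fintype_card] at h1
    rw [Nat.odd_iff] at hodd
    omega
  have h2κ : (2 : κ) ≠ 0 := by
    intro h
    apply hchar
    have h' : ((2 : ℕ) : κ) = 0 := by exact_mod_cast h
    exact ((Nat.dvd_prime Nat.prime_two).mp (ringChar.dvd h')).resolve_left CharP.ringChar_ne_one
  set φ := algebraMap R k with hφ_def
  have hinj : Function.Injective φ := IsFractionRing.injective R k
  have hE0 : φ (↑ε : R) ≠ 0 := fun h => ε.ne_zero (hinj (by rw [h, map_zero]))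
  have hXYk : φ x ^ 2 - φ ↑ε * φ y ^ 2 = φ ↑ε := by
    rw [← map_pow, ← map_pow, ← map_mul, ← map_sub]; exact congrArg φ hxy
  have hEik : φ (↑ε⁻¹ : R) = (φ ↑ε)⁻¹ := by
    refine eq_inv_of_mul_eq_one_left ?_
    rw [← map_mul, ε.inv_mul, map_one]
  -- the key fact: d(g) is a unit
  have hdu : ∀ g : Matrix.SpecialLinearGroup (Fin 2) R,
      IsUnit ((g : Matrix (Fin 2) (Fin 2) R) 0 0 ^ 2 -
        (↑ε : R) * (g : Matrix (Fin 2) (Fin 2) R) 0 1 ^ 2) := by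
    intro g
    have hdet : (g : Matrix (Fin 2) (Fin 2) R) 0 0 * (g : Matrix (Fin 2) (Fin 2) R) 1 1 -
        (g : Matrix (Fin 2) (Fin 2) R) 0 1 * (g : Matrix (Fin 2) (Fin 2) R) 1 0 = 1 := by
      have h := g.2
      rwa [Matrix.det_fin_two] at h
    by_contra hnd
    have h0 : res ((g : Matrix (Fin 2) (Fin 2) R) 0 0 ^ 2 -
        (↑ε : R) * (g : Matrix (Fin 2) (Fin 2) R) 0 1 ^ 2) = 0 :=
      Ideal.Quotient.eq_zero_iff_mem.mpr ((IsLocalRing.mem_maximalIdeal _).mpr hnd)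
    rw [map_sub, map_mul, map_pow, map_pow] at h0
    by_cases hB : res ((g : Matrix (Fin 2) (Fin 2) R) 0 1) = 0
    · have hA : res ((g : Matrix (Fin 2) (Fin 2) R) 0 0) = 0 := by
        have : res ((g : Matrix (Fin 2) (Fin 2) R) 0 0) ^ 2 = 0 := by
          rw [sub_eq_zero] at h0; rw [h0, hB]; ring
        exact pow_eq_zero_iff (by norm_num) |>.mp this
      have h1 : (1 : κ) = 0 := by
        have := congrArg res hdet
        rw [map_one, map_sub, map_mul, map_mul, hA, hB, zero_mul, zero_mul, sub_zero] at this
        exact this.symm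
      exact one_ne_zero h1
    · apply hε
      refine ⟨res ((g : Matrix (Fin 2) (Fin 2) R) 0 0) *
        (res ((g : Matrix (Fin 2) (Fin 2) R) 0 1))⁻¹, ?_⟩
      field_simp
      linear_combination -h0
  refine ⟨hdetE, ?_, ?_⟩
  · -- totality
    intro g
    set gm : Matrix (Fin 2) (Fin 2) R := (g : Matrix (Fin 2) (Fin 2) R) with hgm
    have hdet : gm 0 0 * gm 1 1 - gm 0 1 * gm 1 0 = 1 := by
      have h := g.2; rwa [Matrix.det_fin_two] at h
    have hgdet : (gm.map φ) 0 0 * (gm.map φ) 1 1 - (gm.map φ) 0 1 * (gm.map φ) 1 0 = 1 := by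
      simp only [Matrix.map_apply]
      rw [← map_mul, ← map_mul, ← map_sub, hdet, map_one]
    have hdu' := hdu g
    by_cases hsq : IsSquare (res (gm 0 0 ^ 2 - ↑ε * gm 0 1 ^ 2))
    · left
      obtain ⟨u, huu, hu2⟩ := sq_lift_of_unit h2κ hdu' hsq
      have hU0 : φ u ≠ 0 := fun h => huu.ne_zero (hinj (by rw [h, map_zero]))
      have hUik : φ (↑huu.unit⁻¹ : R) = (φ u)⁻¹ := by
        refine eq_inv_of_mul_eq_one_left ?_
        rw [← map_mul, IsUnit.val_inv_mul, map_one]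
      have hu2k : φ u * φ u = φ (gm 0 0) ^ 2 - φ ↑ε * φ (gm 0 1) ^ 2 := by
        rw [← map_mul, ← map_pow, ← map_pow, ← map_mul, ← map_sub]; exact congrArg φ hu2
      have htor : (φ (gm 0 0) / φ u) ^ 2 - φ ↑ε * (φ (gm 0 1) / φ u) ^ 2 = 1 := by
        field_simp
        linear_combination -hu2k
      set m : Matrix (Fin 2) (Fin 2) k :=
        !![φ (gm 0 0) / φ u, φ (gm 0 1) / φ u; φ (gm 0 1) / φ u * φ ↑ε, φ (gm 0 0) / φ u]
        with hm
      have hh : m 0 0 * m 1 1 - m 0 1 * m 1 0 = 1 := by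
        simp only [hm]
        simp
        linear_combination htor
      have e00 : (gm.map φ) 0 0 = φ u * m 0 0 := by
        simp only [hm]
        simp [Matrix.map_apply]
        field_simp
      have e01 : (gm.map φ) 0 1 = φ u * m 0 1 := by
        simp only [hm]
        simp [Matrix.map_apply]
        field_simp
      have hdec := decomp_2x2 (φ u) hU0 m (gm.map φ) hh hgdet e00 e01
      have hbdet : (!![u, 0; ↑huu.unit⁻¹ * (gm 0 0 * gm 1 0 - ↑ε * gm 0 1 * gm 1 1),
          ↑huu.unit⁻¹] : Matrix (Fin 2) (Fin 2) R).det = 1 := by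
        rw [Matrix.det_fin_two_of]
        simp [IsUnit.mul_val_inv]
      refine ⟨⟨_, hbdet⟩, by simp, m, ⟨_, _, htor, hm⟩, ?_⟩
      show gm.map φ = (!![u, 0; ↑huu.unit⁻¹ * (gm 0 0 * gm 1 0 - ↑ε * gm 0 1 * gm 1 1),
          ↑huu.unit⁻¹] : Matrix (Fin 2) (Fin 2) R).map φ * m
      have hbm : (!![u, 0; ↑huu.unit⁻¹ * (gm 0 0 * gm 1 0 - ↑ε * gm 0 1 * gm 1 1),
          ↑huu.unit⁻¹] : Matrix (Fin 2) (Fin 2) R).map φ =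
          !![φ u, 0; m 1 1 * (gm.map φ) 1 0 - m 1 0 * (gm.map φ) 1 1, (φ u)⁻¹] := by
        have hm10 : m 1 0 = φ (gm 0 1) / φ u * φ ↑ε := by simp [hm]
        have hm11 : m 1 1 = φ (gm 0 0) / φ u := by simp [hm]
        have h10A : φ (↑huu.unit⁻¹ * (gm 0 0 * gm 1 0 - ↑ε * gm 0 1 * gm 1 1)) =
            m 1 1 * (gm.map φ) 1 0 - m 1 0 * (gm.map φ) 1 1 := by
          simp only [map_mul, map_sub, Matrix.map_apply, hUik, hm10, hm11]
          field_simp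
          try ring
          try tauto
        ext i j
        fin_cases i <;> fin_cases j <;> simp [Matrix.map_apply, hUik, h10A]
      rw [hbm]
      exact hdec
    · right
      have hdu2 : IsUnit ((gm 0 0 ^ 2 - ↑ε * gm 0 1 ^ 2) * ↑ε⁻¹) :=
        hdu'.mul (ε⁻¹ : Rˣ).isUnit
      have hee : res ↑ε * res (↑ε⁻¹ : R) = 1 := by rw [← map_mul, hεi, map_one]
      have hsq2 : IsSquare (res ((gm 0 0 ^ 2 - ↑ε * gm 0 1 ^ 2) * ↑ε⁻¹)) := by
        rw [map_mul]
        refine isSquare_mul_of_not_of_not hsq ?_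
        rintro ⟨s, hs⟩
        exact hε ⟨res ↑ε * s, by linear_combination (res ↑ε)^2 * hs - res ↑ε * hee⟩
      obtain ⟨u, huu, hu2⟩ := sq_lift_of_unit h2κ hdu2 hsq2
      have hu2' : u * u * ↑ε = gm 0 0 ^ 2 - ↑ε * gm 0 1 ^ 2 := by
        linear_combination (↑ε : R) * hu2 + (gm 0 0 ^ 2 - ↑ε * gm 0 1 ^ 2) * hεi
      have hU0 : φ u ≠ 0 := fun h => huu.ne_zero (hinj (by rw [h, map_zero]))
      have hEprod : φ ↑ε * φ (↑ε⁻¹ : R) = 1 := by rw [← map_mul, hεi, map_one]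
      have hUprod : φ u * φ (↑huu.unit⁻¹ : R) = 1 := by
        rw [← map_mul, IsUnit.mul_val_inv, map_one]
      have hUik : φ (↑huu.unit⁻¹ : R) = (φ u)⁻¹ := eq_inv_of_mul_eq_one_left (by
        rw [← map_mul, IsUnit.val_inv_mul, map_one])
      have hu2k : φ u * φ u * φ ↑ε = φ (gm 0 0) ^ 2 - φ ↑ε * φ (gm 0 1) ^ 2 := by
        rw [← map_mul, ← map_mul, ← map_pow, ← map_pow, ← map_mul, ← map_sub]
        exact congrArg φ hu2'
      set A : k := φ (↑ε⁻¹ : R) * φ (↑huu.unit⁻¹ : R) *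
        (φ x * φ (gm 0 0) - φ ↑ε * φ y * φ (gm 0 1)) with hA
      set B : k := φ (↑ε⁻¹ : R) * φ (↑huu.unit⁻¹ : R) *
        (φ x * φ (gm 0 1) - φ y * φ (gm 0 0)) with hB
      have htor : A ^ 2 - φ ↑ε * B ^ 2 = 1 := by
        rw [hA, hB]
        linear_combination
          (φ (↑ε⁻¹ : R))^2 * (φ (↑huu.unit⁻¹ : R))^2 *
            (φ (gm 0 0) ^ 2 - φ ↑ε * φ (gm 0 1) ^ 2) * hXYk -
          (φ (↑ε⁻¹ : R))^2 * (φ (↑huu.unit⁻¹ : R))^2 * φ ↑ε * hu2k +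
          (φ ↑ε * φ (↑ε⁻¹ : R) + 1) * (φ u * φ (↑huu.unit⁻¹ : R))^2 * hEprod +
          (φ u * φ (↑huu.unit⁻¹ : R) + 1) * hUprod
      set m : Matrix (Fin 2) (Fin 2) k := !![A, B; B * φ ↑ε, A] with hm
      set em : Matrix (Fin 2) (Fin 2) k :=
        (!![x, y; y, (↑ε⁻¹ : R) * x] : Matrix (Fin 2) (Fin 2) R).map φ with hem
      have hm00 : (em * m) 0 0 = φ x * A + φ y * (B * φ ↑ε) := by
        simp only [hem, hm]
        simp [Matrix.mul_apply, Fin.sum_univ_two, Matrix.map_apply]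
      have hm01 : (em * m) 0 1 = φ x * B + φ y * A := by
        simp only [hem, hm]
        simp [Matrix.mul_apply, Fin.sum_univ_two, Matrix.map_apply]
      have hm10 : (em * m) 1 0 = φ y * A + φ (↑ε⁻¹ : R) * φ x * (B * φ ↑ε) := by
        simp only [hem, hm]
        simp [Matrix.mul_apply, Fin.sum_univ_two, Matrix.map_apply, mul_assoc]
      have hm11 : (em * m) 1 1 = φ y * B + φ (↑ε⁻¹ : R) * φ x * A := by
        simp only [hem, hm]
        simp [Matrix.mul_apply, Fin.sum_univ_two, Matrix.map_apply, mul_assoc]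
      have hdetm : m.det = 1 := by
        rw [hm, Matrix.det_fin_two_of]; linear_combination htor
      have hdeth : (em * m) 0 0 * (em * m) 1 1 - (em * m) 0 1 * (em * m) 1 0 = 1 := by
        rw [← Matrix.det_fin_two, Matrix.det_mul, hdetm, mul_one, hem, ← RingHom.mapMatrix_apply,
          ← RingHom.map_det, hdetE, map_one]
      have e00 : (gm.map φ) 0 0 = φ u * (em * m) 0 0 := by
        rw [hm00, hA, hB]
        show φ (gm 0 0) = _
        linear_combination
          (-(φ (gm 0 0) * φ u * φ (↑huu.unit⁻¹ : R))) * hEprod - φ (gm 0 0) * hUprod -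
          φ u * φ (↑ε⁻¹ : R) * φ (↑huu.unit⁻¹ : R) * φ (gm 0 0) * hXYk
      have e01 : (gm.map φ) 0 1 = φ u * (em * m) 0 1 := by
        rw [hm01, hA, hB]
        show φ (gm 0 1) = _
        linear_combination
          (-(φ (gm 0 1) * φ u * φ (↑huu.unit⁻¹ : R))) * hEprod - φ (gm 0 1) * hUprod -
          φ u * φ (↑ε⁻¹ : R) * φ (↑huu.unit⁻¹ : R) * φ (gm 0 1) * hXYk
      have hdec := decomp_2x2 (φ u) hU0 (em * m) (gm.map φ) hdeth hgdet e00 e01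
      set aR : R := ↑ε⁻¹ * ↑huu.unit⁻¹ * (x * gm 0 0 - ↑ε * y * gm 0 1) with haR
      set bR : R := ↑ε⁻¹ * ↑huu.unit⁻¹ * (x * gm 0 1 - y * gm 0 0) with hbR
      set cR : R := (y * bR + ↑ε⁻¹ * x * aR) * gm 1 0 - (y * aR + x * bR) * gm 1 1 with hcR
      have haRk : φ aR = A := by
        rw [haR, hA]
        simp only [map_mul, map_sub]
      have hbRk : φ bR = B := by
        rw [hbR, hB]
        simp only [map_mul, map_sub]
      have hbdet : (!![u, 0; cR, ↑huu.unit⁻¹] : Matrix (Fin 2) (Fin 2) R).det = 1 := by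
        rw [Matrix.det_fin_two_of]
        simp [IsUnit.mul_val_inv]
      refine ⟨⟨_, hbdet⟩, by simp, m, ⟨_, _, htor, hm⟩, ?_⟩
      show gm.map φ = (!![u, 0; cR, ↑huu.unit⁻¹] : Matrix (Fin 2) (Fin 2) R).map φ * em * m
      have h10B : φ cR = (em * m) 1 1 * (gm.map φ) 1 0 - (em * m) 1 0 * (gm.map φ) 1 1 := by
        rw [hcR, hm10, hm11]
        simp only [map_sub, map_mul, map_add, Matrix.map_apply, haRk, hbRk]
        linear_combination (φ x * B * φ (gm 1 1)) * hEprod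
      have hbm : (!![u, 0; cR, ↑huu.unit⁻¹] : Matrix (Fin 2) (Fin 2) R).map φ =
          !![φ u, 0; (em * m) 1 1 * (gm.map φ) 1 0 - (em * m) 1 0 * (gm.map φ) 1 1, (φ u)⁻¹] := by
        ext i j
        fin_cases i <;> fin_cases j <;> simp [Matrix.map_apply, hUik, h10B]
      rw [hbm, Matrix.mul_assoc]
      exact hdec
  · -- disjointness
    intro g ⟨⟨b₁, hb₁, m₁, hm₁, heq₁⟩, ⟨b₂, hb₂, m₂, hm₂, heq₂⟩⟩
    have k1 := coset1_key hinj (↑ε : R) _ _ hb₁ m₁ hm₁ heq₁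
    have k2 := coset2_key hinj (↑ε : R) x y ((↑ε⁻¹ : R) * x) hxy _ _ hb₂ m₂ hm₂ heq₂
    have key : (b₁ : Matrix (Fin 2) (Fin 2) R) 0 0 ^ 2 =
        (b₂ : Matrix (Fin 2) (Fin 2) R) 0 0 ^ 2 * ↑ε := by rw [← k1, ← k2]
    have hb₂u : res ((b₂ : Matrix (Fin 2) (Fin 2) R) 0 0) ≠ 0 := by
      have hdet : (b₂ : Matrix (Fin 2) (Fin 2) R) 0 0 * (b₂ : Matrix (Fin 2) (Fin 2) R) 1 1 -
          (b₂ : Matrix (Fin 2) (Fin 2) R) 0 1 * (b₂ : Matrix (Fin 2) (Fin 2) R) 1 0 = 1 := by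
        have h := b₂.2
        rwa [Matrix.det_fin_two] at h
      rw [hb₂, zero_mul, sub_zero] at hdet
      intro h0
      have := congrArg res hdet
      rw [map_one, map_mul, h0, zero_mul] at this
      exact one_ne_zero this.symm
    apply hε
    refine ⟨res ((b₁ : Matrix (Fin 2) (Fin 2) R) 0 0) *
      (res ((b₂ : Matrix (Fin 2) (Fin 2) R) 0 0))⁻¹, ?_⟩
    have keyr := congrArg res key
    rw [map_pow, map_mul, map_pow] at keyr
    field_simp
    linear_combination -keyr
end

section
/- Let ε ∈ R^× be a unit whose image in κ is not a square, let T = { [[a, b],[bε, a]] : a, b ∈ k, a² − εb² = 1 } ⊆ SL₂(k), let t ≥ 1 be an integer, and set α = diag(ϖ^{-t}, ϖ^{t}). Then: (i) { g ∈ SL₂(R) : α^{-1} g α ∈ T } = { [[a, b],[bεϖ^{4t}, a]] : a, b ∈ R, a² − εϖ^{4t}b² = 1 }; and (ii) for every integer m ≥ 1, { g ∈ K_m : α^{-1} g α ∈ T } = { [[a, b],[bεϖ^{4t}, a]] : a ∈ 1 + P^{2t+m}, b ∈ P^{m}, a² − εϖ^{4t}b² = 1 }. -/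
section Aux

variable {R : Type*} [CommRing R] [IsDomain R]
  {k : Type*} [Field k] [Algebra R k] [IsFractionRing R k]

omit [IsDomain R] in
private theorem conj_keylem (ϖ : R) (hϖ : Irreducible ϖ) (t : ℕ)
    (g : Matrix.SpecialLinearGroup (Fin 2) R) :
    (Matrix.diagonal ![(algebraMap R k ϖ) ^ (t : ℤ), (algebraMap R k ϖ) ^ (-(t : ℤ))] *
        ((g : Matrix (Fin 2) (Fin 2) R).map (algebraMap R k)) *
        Matrix.diagonal ![(algebraMap R k ϖ) ^ (-(t : ℤ)), (algebraMap R k ϖ) ^ (t : ℤ)]) =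
      !![algebraMap R k (g 0 0), algebraMap R k (g 0 1) * (algebraMap R k ϖ) ^ (2 * t);
         algebraMap R k (g 1 0) * ((algebraMap R k ϖ) ^ (2 * t))⁻¹, algebraMap R k (g 1 1)] := by
  set φ := algebraMap R k with hφ
  have hinj : Function.Injective φ := IsFractionRing.injective R k
  have hπ : φ ϖ ≠ 0 := fun h => hϖ.ne_zero (hinj (by simp [h]))
  have hx : (φ ϖ) ^ t ≠ 0 := pow_ne_zero _ hπ
  ext i j
  fin_cases i <;> fin_cases j <;>
    simp [Matrix.mul_apply, Fin.sum_univ_two, Matrix.diagonal, zpow_neg, zpow_natCast]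
  · rw [mul_comm, ← mul_assoc, inv_mul_cancel₀ hx, one_mul]
  · rw [two_mul, pow_add]; ring
  · rw [two_mul, pow_add, mul_inv]; ring
  · rw [mul_comm, ← mul_assoc, mul_inv_cancel₀ hx, one_mul]

private theorem conj_core_iff (ϖ : R) (hϖ : Irreducible ϖ) (ε : Rˣ) (t : ℕ)
    (g : Matrix.SpecialLinearGroup (Fin 2) R) :
    InUnramifiedTorus R k (↑ε)
      (Matrix.diagonal ![(algebraMap R k ϖ) ^ (t : ℤ), (algebraMap R k ϖ) ^ (-(t : ℤ))] *
        ((g : Matrix (Fin 2) (Fin 2) R).map (algebraMap R k)) *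
        Matrix.diagonal ![(algebraMap R k ϖ) ^ (-(t : ℤ)), (algebraMap R k ϖ) ^ (t : ℤ)]) ↔
    ∃ a b : R, a ^ 2 - (↑ε : R) * ϖ ^ (4 * t) * b ^ 2 = 1 ∧
      (g : Matrix (Fin 2) (Fin 2) R) = !![a, b; b * (↑ε : R) * ϖ ^ (4 * t), a] := by
  set φ := algebraMap R k with hφ
  have hinj : Function.Injective φ := IsFractionRing.injective R k
  have hπ : φ ϖ ≠ 0 := fun h => hϖ.ne_zero (hinj (by simp [h]))
  have hX : (φ ϖ) ^ (2 * t) ≠ 0 := pow_ne_zero _ hπ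
  rw [show InUnramifiedTorus R k (↑ε)
      (Matrix.diagonal ![(algebraMap R k ϖ) ^ (t : ℤ), (algebraMap R k ϖ) ^ (-(t : ℤ))] *
        ((g : Matrix (Fin 2) (Fin 2) R).map (algebraMap R k)) *
        Matrix.diagonal ![(algebraMap R k ϖ) ^ (-(t : ℤ)), (algebraMap R k ϖ) ^ (t : ℤ)]) =
      InUnramifiedTorus R k (↑ε)
      !![φ (g 0 0), φ (g 0 1) * (φ ϖ) ^ (2 * t);
         φ (g 1 0) * ((φ ϖ) ^ (2 * t))⁻¹, φ (g 1 1)] from by rw [conj_keylem ϖ hϖ t g]]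
  constructor
  · rintro ⟨a, b, heq, hM⟩
    have hE := Matrix.ext_iff.mpr hM
    have e00 : φ (g 0 0) = a := by simpa using hE 0 0
    have e01 : φ (g 0 1) * (φ ϖ) ^ (2 * t) = b := by simpa using hE 0 1
    have e10 : φ (g 1 0) * ((φ ϖ) ^ (2 * t))⁻¹ = b * φ (↑ε) := by simpa using hE 1 0
    have e11 : φ (g 1 1) = a := by simpa using hE 1 1
    have h10 : g 1 0 = g 0 1 * (↑ε : R) * ϖ ^ (4 * t) := by
      apply hinj
      rw [map_mul, map_mul, map_pow]
      have h := e10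
      rw [← e01] at h
      field_simp at h
      rw [h]; ring
    have h11 : g 1 1 = g 0 0 := hinj (e11.trans e00.symm)
    refine ⟨g 0 0, g 0 1, ?_, ?_⟩
    · apply hinj
      rw [map_sub, map_one, map_pow, map_mul, map_mul, map_pow, map_pow]
      rw [← e00, ← e01] at heq
      linear_combination heq
    · ext i j
      fin_cases i <;> fin_cases j <;> simp [h10, h11]
  · rintro ⟨a, b, heq, hg⟩
    have hE := Matrix.ext_iff.mpr hg
    have e00 : g 0 0 = a := by simpa using hE 0 0
    have e01 : g 0 1 = b := by simpa using hE 0 1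
    have e10 : g 1 0 = b * (↑ε : R) * ϖ ^ (4 * t) := by simpa using hE 1 0
    have e11 : g 1 1 = a := by simpa using hE 1 1
    refine ⟨φ a, φ b * (φ ϖ) ^ (2 * t), ?_, ?_⟩
    · have h := congrArg φ heq
      rw [map_sub, map_one, map_pow, map_mul, map_mul, map_pow, map_pow] at h
      linear_combination h
    · ext i j
      fin_cases i <;> fin_cases j <;>
        simp [e00, e01, e10, e11, map_mul, map_pow]
      · field_simp; ring

private theorem two_isUnit_of_oddCard (R : Type*) [CommRing R] [IsDomain R]
    [IsDiscreteValuationRing R] [Finite (IsLocalRing.ResidueField R)]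
    (hodd : Odd (Nat.card (IsLocalRing.ResidueField R))) : IsUnit (2 : R) := by
  by_contra h2
  have hmem2 : (2 : R) ∈ IsLocalRing.maximalIdeal R := h2
  have hres : (IsLocalRing.residue R) 2 = 0 := Ideal.Quotient.eq_zero_iff_mem.mpr hmem2
  have h2κ : (2 : IsLocalRing.ResidueField R) = 0 := by
    rw [← hres]; exact (map_ofNat _ 2).symm
  have hord : addOrderOf (1 : IsLocalRing.ResidueField R) = 2 := by
    refine addOrderOf_eq_prime ?_ one_ne_zero
    rw [two_smul, one_add_one_eq_two, h2κ]
  have hdvd := addOrderOf_dvd_natCard (1 : IsLocalRing.ResidueField R)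
  rw [hord] at hdvd
  rw [Nat.odd_iff] at hodd
  omega

end Aux

/-- With `α = diag(ϖ^{-t}, ϖ^{t})` and `T = T_{1,ε}` unramified:
(i) `K ∩ T^α = T_{1, εϖ^{4t}}`, and (ii) for `m ≥ 1`,
`K_m ∩ T^α = { t(a,b) : a ∈ 1 + P^{2t+m}, b ∈ P^m }`. -/
theorem inter_conj_unramified_torus
    (R : Type*) [CommRing R] [IsDomain R] [IsDiscreteValuationRing R]
    [IsAdicComplete (IsLocalRing.maximalIdeal R) R]
    [Finite (IsLocalRing.ResidueField R)]
    (hodd : Odd (Nat.card (IsLocalRing.ResidueField R)))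
    (k : Type*) [Field k] [Algebra R k] [IsFractionRing R k]
    (ϖ : R) (hϖ : Irreducible ϖ)
    (ε : Rˣ) (hε : ¬ IsSquare (IsLocalRing.residue R (↑ε : R)))
    (t : ℕ) (ht : 1 ≤ t) :
    ({g : Matrix.SpecialLinearGroup (Fin 2) R |
        InUnramifiedTorus R k (↑ε)
          (Matrix.diagonal ![(algebraMap R k ϖ) ^ (t : ℤ), (algebraMap R k ϖ) ^ (-(t : ℤ))] *
            ((g : Matrix (Fin 2) (Fin 2) R).map (algebraMap R k)) *
            Matrix.diagonal ![(algebraMap R k ϖ) ^ (-(t : ℤ)), (algebraMap R k ϖ) ^ (t : ℤ)])} =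
      {g : Matrix.SpecialLinearGroup (Fin 2) R |
        ∃ a b : R, a ^ 2 - (↑ε : R) * ϖ ^ (4 * t) * b ^ 2 = 1 ∧
          (g : Matrix (Fin 2) (Fin 2) R) = !![a, b; b * (↑ε : R) * ϖ ^ (4 * t), a]}) ∧
    (∀ m : ℕ, 1 ≤ m →
      ({g : Matrix.SpecialLinearGroup (Fin 2) R |
        (∀ i j, ϖ ^ m ∣ ((g : Matrix (Fin 2) (Fin 2) R) - 1) i j) ∧
        InUnramifiedTorus R k (↑ε)
          (Matrix.diagonal ![(algebraMap R k ϖ) ^ (t : ℤ), (algebraMap R k ϖ) ^ (-(t : ℤ))] *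
            ((g : Matrix (Fin 2) (Fin 2) R).map (algebraMap R k)) *
            Matrix.diagonal ![(algebraMap R k ϖ) ^ (-(t : ℤ)), (algebraMap R k ϖ) ^ (t : ℤ)])} =
      {g : Matrix.SpecialLinearGroup (Fin 2) R |
        ∃ a b : R, a ^ 2 - (↑ε : R) * ϖ ^ (4 * t) * b ^ 2 = 1 ∧
          ϖ ^ (2 * t + m) ∣ (a - 1) ∧ ϖ ^ m ∣ b ∧
          (g : Matrix (Fin 2) (Fin 2) R) = !![a, b; b * (↑ε : R) * ϖ ^ (4 * t), a]})) := by
  have h2 : IsUnit (2 : R) := two_isUnit_of_oddCard R hodd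
  constructor
  · ext g
    simp only [Set.mem_setOf_eq]
    exact conj_core_iff ϖ hϖ ε t g
  · intro m hm
    ext g
    simp only [Set.mem_setOf_eq]
    constructor
    · rintro ⟨hKm, hT⟩
      obtain ⟨a, b, heq, hg⟩ := (conj_core_iff ϖ hϖ ε t g).mp hT
      have hE := Matrix.ext_iff.mpr hg
      have e00 : g 0 0 = a := by simpa using hE 0 0
      have e01 : g 0 1 = b := by simpa using hE 0 1
      have hb : ϖ ^ m ∣ b := by
        have := hKm 0 1
        simpa [e01] using this
      have ha : ϖ ^ m ∣ (a - 1) := by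
        have := hKm 0 0
        simpa [e00, Matrix.one_apply] using this
      refine ⟨a, b, heq, ?_, hb, hg⟩
      -- upgrade divisibility for a - 1
      have hmem : a - 1 ∈ IsLocalRing.maximalIdeal R := by
        obtain ⟨c, hc⟩ := ha
        rw [hc]
        refine Ideal.mul_mem_right _ _ ?_
        have hϖmem : ϖ ∈ IsLocalRing.maximalIdeal R := hϖ.not_isUnit
        have hpow : ϖ ^ m = ϖ * ϖ ^ (m - 1) := by
          rw [← pow_succ']; congr 1; omega
        rw [hpow]
        exact Ideal.mul_mem_right _ _ hϖmem
      have hu : IsUnit (a + 1) := by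
        by_contra hnu
        have ha1 : (a + 1) ∈ IsLocalRing.maximalIdeal R := hnu
        have : (2 : R) ∈ IsLocalRing.maximalIdeal R := by
          have hsub := Ideal.sub_mem _ ha1 hmem
          have h2eq : (a + 1) - (a - 1) = 2 := by ring
          rwa [h2eq] at hsub
        exact this h2
      have hdvd : ϖ ^ (4 * t + 2 * m) ∣ (a - 1) * (a + 1) := by
        have hfac : (a - 1) * (a + 1) = (↑ε : R) * ϖ ^ (4 * t) * b ^ 2 := by
          linear_combination heq
        obtain ⟨c, hc⟩ := hb
        rw [hfac, hc]
        exact ⟨(↑ε : R) * c ^ 2, by ring⟩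
      have hdvd' : ϖ ^ (4 * t + 2 * m) ∣ (a - 1) := (hu.dvd_mul_right).mp hdvd
      exact dvd_trans (pow_dvd_pow ϖ (by omega)) hdvd'
    · rintro ⟨a, b, heq, ha, hb, hg⟩
      refine ⟨?_, (conj_core_iff ϖ hϖ ε t g).mpr ⟨a, b, heq, hg⟩⟩
      intro i j
      have ham : ϖ ^ m ∣ (a - 1) := dvd_trans (pow_dvd_pow ϖ (by omega)) ha
      fin_cases i <;> fin_cases j <;>
        simp [hg, Matrix.one_apply]
      · exact ham
      · exact hb
      · exact dvd_mul_of_dvd_left (dvd_mul_of_dvd_left hb _) _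
      · exact ham
end

section
/- Let ε ∈ R^× be a unit whose image in κ is not a square, let T = { [[a, b],[bε, a]] : a, b ∈ k, a² − εb² = 1 } ⊆ SL₂(k), let t ≥ 1 and m ≥ 1 be integers, and set α = diag(ϖ^{-t}, ϖ^{t}). Then every g ∈ SL₂(R) with α^{-1} g α ∈ T·K_m factors as g = g₁ g₂ with g₁, g₂ ∈ SL₂(R), α^{-1} g₁ α ∈ T, and α^{-1} g₂ α ∈ K_m; that is, K ∩ (T·K_m)^{α} = (K ∩ T^{α})(K ∩ K_m^{α}), where H^{α} = αHα^{-1}. -/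
section AuxLemmas
open IsLocalRing

lemma dvd_of_sq_eq_pow
    (R : Type*) [CommRing R] [IsDomain R] [IsDiscreteValuationRing R]
    (ϖ : R) (hϖ : Irreducible ϖ) (e : R)
    (hε : ¬ IsSquare (IsLocalRing.residue R e)) :
    ∀ (n : ℕ) (A B : R), A ^ 2 - e * B ^ 2 = ϖ ^ (2 * n) → ϖ ^ n ∣ A ∧ ϖ ^ n ∣ B := by
  have hprime : Prime ϖ := (UniqueFactorizationMonoid.irreducible_iff_prime).mp hϖ
  have hmax : maximalIdeal R = Ideal.span {ϖ} :=
    (IsDiscreteValuationRing.irreducible_iff_uniformizer ϖ).mp hϖ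
  have hres : ∀ r : R, residue R r = 0 ↔ ϖ ∣ r := by
    intro r
    rw [residue_eq_zero_iff]
    rw [hmax, Ideal.mem_span_singleton]
  intro n
  induction n with
  | zero => intro A B h; simp
  | succ n IH =>
    intro A B hE
    have hB : ϖ ∣ B := by
      by_contra hB
      have h1 : ϖ ∣ A ^ 2 - e * B ^ 2 := by
        rw [hE]; exact dvd_pow_self ϖ (by omega)
      have h2 : residue R A ^ 2 = residue R e * residue R B ^ 2 := by
        have := (hres _).mpr h1
        rw [map_sub, map_mul, map_pow, map_pow, sub_eq_zero] at this
        exact this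
      have hB0 : residue R B ≠ 0 := fun h => hB ((hres B).mp h)
      apply hε
      refine ⟨residue R A * (residue R B)⁻¹, ?_⟩
      field_simp
      linear_combination -h2
    have hA : ϖ ∣ A := by
      refine hprime.dvd_of_dvd_pow (n := 2) ?_
      have hh : A ^ 2 = e * B ^ 2 + ϖ ^ (2 * (n + 1)) := by linear_combination hE
      rw [hh]
      exact dvd_add (Dvd.dvd.mul_left (dvd_pow hB two_ne_zero) e)
        (dvd_pow_self ϖ (by omega))
    obtain ⟨A', rfl⟩ := hA
    obtain ⟨B', rfl⟩ := hB
    have hE' : A' ^ 2 - e * B' ^ 2 = ϖ ^ (2 * n) := by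
      have hϖ2 : (ϖ ^ 2 : R) ≠ 0 := pow_ne_zero _ hprime.ne_zero
      apply mul_left_cancel₀ hϖ2
      rw [show ϖ ^ 2 * (A' ^ 2 - e * B' ^ 2) = (ϖ * A') ^ 2 - e * (ϖ * B') ^ 2 by ring, hE]
      rw [show 2 * (n + 1) = 2 + 2 * n by ring, pow_add]
    obtain ⟨h1, h2⟩ := IH A' B' hE'
    have hp : (ϖ : R) ^ (n + 1) = ϖ * ϖ ^ n := by ring
    rw [hp]
    exact ⟨mul_dvd_mul_left ϖ h1, mul_dvd_mul_left ϖ h2⟩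

lemma integral_of_torus
    (R : Type*) [CommRing R] [IsDomain R] [IsDiscreteValuationRing R]
    (k : Type*) [Field k] [Algebra R k] [IsFractionRing R k]
    (ϖ : R) (hϖ : Irreducible ϖ) (e : R)
    (hε : ¬ IsSquare (IsLocalRing.residue R e))
    (a b : k) (hab : a ^ 2 - algebraMap R k e * b ^ 2 = 1) :
    ∃ a₀ b₀ : R, a = algebraMap R k a₀ ∧ b = algebraMap R k b₀ := by
  set φ := algebraMap R k with hφ
  have hinj : Function.Injective φ := IsFractionRing.injective R k
  obtain ⟨ra, sa, hsa, ha⟩ := IsFractionRing.div_surjective (A := R) a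
  obtain ⟨rb, sb, hsb, hb⟩ := IsFractionRing.div_surjective (A := R) b
  have hsa0 : sa ≠ 0 := nonZeroDivisors.ne_zero hsa
  have hsb0 : sb ≠ 0 := nonZeroDivisors.ne_zero hsb
  have hφsa : φ sa ≠ 0 := fun h => hsa0 (hinj (by simp [h]))
  have hφsb : φ sb ≠ 0 := fun h => hsb0 (hinj (by simp [h]))
  obtain ⟨n, u, hu⟩ := IsDiscreteValuationRing.eq_unit_mul_pow_irreducible
    (mul_ne_zero hsa0 hsb0) hϖ
  have hϖ0 : (ϖ : R) ≠ 0 := hϖ.ne_zero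
  have hφϖ : φ (ϖ ^ n) ≠ 0 := fun h => pow_ne_zero n hϖ0 (hinj (by simp [h]))
  set A : R := ↑u⁻¹ * (ra * sb) with hA
  set B : R := ↑u⁻¹ * (rb * sa) with hB
  have huu : φ ↑u⁻¹ * φ ↑u = 1 := by rw [← map_mul]; simp
  have haA : a * φ (ϖ ^ n) = φ A := by
    have key : a * φ (ϖ ^ n) * φ ↑u = φ (ra * sb) := by
      calc a * φ (ϖ ^ n) * φ ↑u = a * φ (↑u * ϖ ^ n) := by rw [map_mul]; ring
        _ = a * (φ sa * φ sb) := by rw [← hu, map_mul]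
        _ = (φ ra / φ sa) * (φ sa * φ sb) := by rw [ha]
        _ = φ ra * φ sb := by field_simp
        _ = φ (ra * sb) := by rw [map_mul]
    calc a * φ (ϖ ^ n) = a * φ (ϖ ^ n) * (φ ↑u * φ ↑u⁻¹) := by
          rw [mul_comm (φ ↑u), huu, mul_one]
      _ = (a * φ (ϖ ^ n) * φ ↑u) * φ ↑u⁻¹ := by ring
      _ = φ (ra * sb) * φ ↑u⁻¹ := by rw [key]
      _ = φ A := by rw [hA, ← map_mul]; ring_nf
  have hbB : b * φ (ϖ ^ n) = φ B := by
    have key : b * φ (ϖ ^ n) * φ ↑u = φ (rb * sa) := by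
      calc b * φ (ϖ ^ n) * φ ↑u = b * φ (↑u * ϖ ^ n) := by rw [map_mul]; ring
        _ = b * (φ sa * φ sb) := by rw [← hu, map_mul]
        _ = (φ rb / φ sb) * (φ sa * φ sb) := by rw [hb]
        _ = φ rb * φ sa := by field_simp
        _ = φ (rb * sa) := by rw [map_mul]
    calc b * φ (ϖ ^ n) = b * φ (ϖ ^ n) * (φ ↑u * φ ↑u⁻¹) := by
          rw [mul_comm (φ ↑u), huu, mul_one]
      _ = (b * φ (ϖ ^ n) * φ ↑u) * φ ↑u⁻¹ := by ring
      _ = φ (rb * sa) * φ ↑u⁻¹ := by rw [key]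
      _ = φ B := by rw [hB, ← map_mul]; ring_nf
  have hEq : A ^ 2 - e * B ^ 2 = ϖ ^ (2 * n) := by
    apply hinj
    simp only [map_sub, map_mul, map_pow]
    simp only [map_pow] at haA hbB
    rw [← haA, ← hbB]
    linear_combination (φ ϖ ^ n) ^ 2 * hab
  obtain ⟨⟨a₀, ha₀⟩, ⟨b₀, hb₀⟩⟩ := dvd_of_sq_eq_pow R ϖ hϖ e hε n A B hEq
  refine ⟨a₀, b₀, ?_, ?_⟩
  · apply mul_right_cancel₀ hφϖ
    rw [haA, ha₀, map_mul]; ring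
  · apply mul_right_cancel₀ hφϖ
    rw [hbB, hb₀, map_mul]; ring

lemma two_not_dvd_unif (R : Type*) [CommRing R] [IsDomain R] [IsDiscreteValuationRing R]
    [Finite (IsLocalRing.ResidueField R)]
    (hodd : Odd (Nat.card (IsLocalRing.ResidueField R)))
    (ϖ : R) (hϖ : Irreducible ϖ) : ¬ ϖ ∣ (2 : R) := by
  intro hdvd
  have hmax : maximalIdeal R = Ideal.span {ϖ} :=
    (IsDiscreteValuationRing.irreducible_iff_uniformizer ϖ).mp hϖ
  have h2 : (2 : ResidueField R) = 0 := by
    have h0 : residue R 2 = 0 := by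
      rw [residue_eq_zero_iff]
      rw [hmax, Ideal.mem_span_singleton]
      exact hdvd
    rwa [map_ofNat] at h0
  have hord : addOrderOf (1 : ResidueField R) ∣ 2 := by
    apply addOrderOf_dvd_of_nsmul_eq_zero
    have : ((2:ℕ) : ResidueField R) = 0 := by exact_mod_cast h2
    simpa [nsmul_eq_mul] using this
  have hdvd2 : (2 : ℕ) ∣ Nat.card (ResidueField R) := by
    have hne : addOrderOf (1 : ResidueField R) ≠ 1 := by
      intro h1
      have := AddMonoid.addOrderOf_eq_one_iff.mp h1
      simpa using this
    have h2' : addOrderOf (1 : ResidueField R) = 2 := by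
      rcases (Nat.dvd_prime Nat.prime_two).mp hord with h | h
      · exact absurd h hne
      · exact h
    exact h2' ▸ addOrderOf_dvd_natCard _
  rw [Nat.odd_iff] at hodd
  omega

end AuxLemmas

/-- Membership of the principal congruence subgroup `K_m ⊆ SL₂(R)`, viewed as a set of
matrices over the fraction field `k`. -/
def InCongruenceSubgroup (R k : Type*) [CommRing R] [Field k] [Algebra R k]
    (ϖ : R) (m : ℕ) (x : Matrix (Fin 2) (Fin 2) k) : Prop :=
  ∃ h : Matrix.SpecialLinearGroup (Fin 2) R,
    (∀ i j, ϖ ^ m ∣ ((h : Matrix (Fin 2) (Fin 2) R) - 1) i j) ∧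
    x = (h : Matrix (Fin 2) (Fin 2) R).map (algebraMap R k)

/-- With `α = diag(ϖ^{-t}, ϖ^{t})` and `T = T_{1,ε}` unramified:
`K ∩ (T·K_m)^α = (K ∩ T^α)(K ∩ K_m^α)`. -/
theorem inter_conj_torus_congruence_factors
    (R : Type*) [CommRing R] [IsDomain R] [IsDiscreteValuationRing R]
    [IsAdicComplete (IsLocalRing.maximalIdeal R) R]
    [Finite (IsLocalRing.ResidueField R)]
    (hodd : Odd (Nat.card (IsLocalRing.ResidueField R)))
    (k : Type*) [Field k] [Algebra R k] [IsFractionRing R k]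
    (ϖ : R) (hϖ : Irreducible ϖ)
    (ε : Rˣ) (hε : ¬ IsSquare (IsLocalRing.residue R (↑ε : R)))
    (t m : ℕ) (ht : 1 ≤ t) (hm : 1 ≤ m)
    (g : Matrix.SpecialLinearGroup (Fin 2) R)
    (hg : ∃ tm x : Matrix (Fin 2) (Fin 2) k,
      InUnramifiedTorus R k (↑ε) tm ∧ InCongruenceSubgroup R k ϖ m x ∧
      Matrix.diagonal ![(algebraMap R k ϖ) ^ (t : ℤ), (algebraMap R k ϖ) ^ (-(t : ℤ))] *
          ((g : Matrix (Fin 2) (Fin 2) R).map (algebraMap R k)) *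
          Matrix.diagonal ![(algebraMap R k ϖ) ^ (-(t : ℤ)), (algebraMap R k ϖ) ^ (t : ℤ)] =
        tm * x) :
    ∃ g₁ g₂ : Matrix.SpecialLinearGroup (Fin 2) R,
      g = g₁ * g₂ ∧
      InUnramifiedTorus R k (↑ε)
        (Matrix.diagonal ![(algebraMap R k ϖ) ^ (t : ℤ), (algebraMap R k ϖ) ^ (-(t : ℤ))] *
          ((g₁ : Matrix (Fin 2) (Fin 2) R).map (algebraMap R k)) *
          Matrix.diagonal ![(algebraMap R k ϖ) ^ (-(t : ℤ)), (algebraMap R k ϖ) ^ (t : ℤ)]) ∧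
      InCongruenceSubgroup R k ϖ m
        (Matrix.diagonal ![(algebraMap R k ϖ) ^ (t : ℤ), (algebraMap R k ϖ) ^ (-(t : ℤ))] *
          ((g₂ : Matrix (Fin 2) (Fin 2) R).map (algebraMap R k)) *
          Matrix.diagonal ![(algebraMap R k ϖ) ^ (-(t : ℤ)), (algebraMap R k ϖ) ^ (t : ℤ)]) := by
  classical
  obtain ⟨tm, x, ⟨a, b, hab, htm⟩, ⟨h, hh, hx⟩, hEq⟩ := hg
  set φ := algebraMap R k with hφdef
  have hinj : Function.Injective φ := IsFractionRing.injective R k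
  set π : k := φ ϖ with hπdef
  have hϖ0 : (ϖ : R) ≠ 0 := hϖ.ne_zero
  have hπ0 : π ≠ 0 := fun h0 => hϖ0 (hinj (by simpa using h0))
  have hprime : Prime ϖ := (UniqueFactorizationMonoid.irreducible_iff_prime).mp hϖ
  set Dp : Matrix (Fin 2) (Fin 2) k := Matrix.diagonal ![π ^ (t:ℤ), π ^ (-(t:ℤ))] with hDpd
  set Dm : Matrix (Fin 2) (Fin 2) k := Matrix.diagonal ![π ^ (-(t:ℤ)), π ^ (t:ℤ)] with hDmd
  have hzc : π ^ (t:ℤ) * π ^ (-(t:ℤ)) = 1 := by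
    rw [← zpow_add₀ hπ0]; simp
  have hzc' : π ^ (-(t:ℤ)) * π ^ (t:ℤ) = 1 := by
    rw [← zpow_add₀ hπ0]; simp
  have hz2 : π ^ (t:ℤ) * π ^ (t:ℤ) = φ (ϖ ^ (2*t)) := by
    rw [← zpow_add₀ hπ0, map_pow, ← zpow_natCast]
    norm_num; ring_nf
    rfl
  have hD : Dp * Dm = 1 := by
    ext i j
    fin_cases i <;> fin_cases j <;>
      simp [hDpd, hDmd, Matrix.mul_apply, Fin.sum_univ_two, Matrix.diagonal_apply,
        Matrix.one_apply, hzc, hzc', mul_inv_cancel₀ (pow_ne_zero t hπ0),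
        inv_mul_cancel₀ (pow_ne_zero t hπ0)]
  have hD' : Dm * Dp = 1 := by
    ext i j
    fin_cases i <;> fin_cases j <;>
      simp [hDpd, hDmd, Matrix.mul_apply, Fin.sum_univ_two, Matrix.diagonal_apply,
        Matrix.one_apply, hzc, hzc', mul_inv_cancel₀ (pow_ne_zero t hπ0),
        inv_mul_cancel₀ (pow_ne_zero t hπ0)]
  -- integrality of the torus entries
  obtain ⟨a₀, b₀, ha, hb⟩ := integral_of_torus R k ϖ hϖ (↑ε) hε a b hab
  have hab₀ : a₀ ^ 2 - (↑ε : R) * b₀ ^ 2 = 1 := by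
    apply hinj
    simpa only [map_sub, map_mul, map_pow, map_one, hφdef, ← ha, ← hb] using hab
  set T₀ : Matrix (Fin 2) (Fin 2) R := !![a₀, b₀; b₀ * ↑ε, a₀] with hT₀
  have hdetT₀ : T₀.det = 1 := by
    rw [hT₀, Matrix.det_fin_two_of]; linear_combination hab₀
  have hmapT₀ : T₀.map φ = tm := by
    rw [htm, ha, hb, hT₀]
    ext i j; fin_cases i <;> fin_cases j <;> simp [Matrix.map_apply, map_mul, hφdef]
  have hM : tm * x = (T₀ * (h : Matrix (Fin 2) (Fin 2) R)).map φ := by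
    rw [Matrix.map_mul, hmapT₀, hx]
  -- key divisibility
  have hkey : ϖ ^ (2*t) ∣ a₀ * (h : Matrix (Fin 2) (Fin 2) R) 0 1
      + b₀ * (h : Matrix (Fin 2) (Fin 2) R) 1 1 := by
    have e1 : (Dp * ((g : Matrix (Fin 2) (Fin 2) R)).map φ * Dm) 0 1
        = ((T₀ * (h : Matrix (Fin 2) (Fin 2) R)).map φ) 0 1 := by rw [hEq, hM]
    rw [hDpd, hDmd] at e1
    simp only [Matrix.mul_apply, Fin.sum_univ_two, Matrix.diagonal_apply, Matrix.map_apply,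
      Matrix.cons_val_zero, Matrix.cons_val_one, Matrix.head_cons] at e1
    norm_num at e1
    refine ⟨(g : Matrix (Fin 2) (Fin 2) R) 0 1, ?_⟩
    apply hinj
    have hT00 : T₀ 0 0 = a₀ := by simp [hT₀]
    have hT01 : T₀ 0 1 = b₀ := by simp [hT₀]
    rw [hT00, hT01] at e1
    rw [map_add, map_mul, map_mul, map_mul, map_pow, ← hπdef]
    linear_combination -e1
  have h11 : ¬ ϖ ∣ (h : Matrix (Fin 2) (Fin 2) R) 1 1 := by
    intro hd
    have h1 : ϖ ∣ ((h : Matrix (Fin 2) (Fin 2) R) - 1) 1 1 :=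
      dvd_trans (dvd_pow_self ϖ (by omega)) (hh 1 1)
    have : ϖ ∣ (1 : R) := by
      have h2 : ((h : Matrix (Fin 2) (Fin 2) R) - 1) 1 1
          = (h : Matrix (Fin 2) (Fin 2) R) 1 1 - 1 := by
        simp [Matrix.sub_apply, Matrix.one_apply]
      rw [h2] at h1
      have := dvd_sub hd h1
      simpa using this
    exact hϖ.not_isUnit (isUnit_of_dvd_one this)
  have hmin : ϖ ^ (min (2*t) m) ∣ b₀ := by
    have hd1 : ϖ ^ (min (2*t) m) ∣ a₀ * (h : Matrix (Fin 2) (Fin 2) R) 0 1 := by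
      have : ϖ ^ m ∣ (h : Matrix (Fin 2) (Fin 2) R) 0 1 := by
        have := hh 0 1
        simpa [Matrix.sub_apply, Matrix.one_apply] using this
      exact Dvd.dvd.mul_left (dvd_trans (pow_dvd_pow ϖ (Nat.min_le_right _ _)) this) a₀
    have hd2 : ϖ ^ (min (2*t) m) ∣ b₀ * (h : Matrix (Fin 2) (Fin 2) R) 1 1 := by
      have := dvd_sub (dvd_trans (pow_dvd_pow ϖ (Nat.min_le_left _ _)) hkey) hd1
      simpa using this
    exact hprime.pow_dvd_of_dvd_mul_right _ h11 hd2
  -- helper: map of smul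
  have hsmulmap : ∀ (σ : R) (M : Matrix (Fin 2) (Fin 2) R),
      (σ • M).map φ = φ σ • M.map φ := by
    intro σ M
    ext i j
    simp [Matrix.map_apply, Matrix.smul_apply, smul_eq_mul, map_mul]
  by_cases hcase : m ≤ 2 * t
  · -- Case A : m ≤ 2t, use the central element σ = ±1
    have hbm : ϖ ^ m ∣ b₀ := dvd_trans (pow_dvd_pow ϖ (by omega : m ≤ min (2*t) m)) hmin
    have hm2 : ¬ ϖ ∣ (2 : R) := two_not_dvd_unif R hodd ϖ hϖ
    obtain ⟨σ, hσ2, hσa⟩ : ∃ σ : R, σ * σ = 1 ∧ ϖ ^ m ∣ σ * a₀ - 1 := by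
      have hprod : ϖ ^ m ∣ (a₀ - 1) * (a₀ + 1) := by
        have he : (a₀ - 1) * (a₀ + 1) = ↑ε * b₀ ^ 2 := by linear_combination hab₀
        rw [he, pow_two]
        exact ((hbm.mul_left b₀).mul_left (↑ε : R))
      by_cases hd : ϖ ∣ a₀ + 1
      · have hnd : ¬ ϖ ∣ a₀ - 1 := by
          intro hc
          apply hm2
          have hds := dvd_sub hd hc
          rwa [show a₀ + 1 - (a₀ - 1) = 2 by ring] at hds
        refine ⟨-1, by ring, ?_⟩
        have h1 := hprime.pow_dvd_of_dvd_mul_left m hnd hprod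
        rw [show (-1 : R) * a₀ - 1 = -(a₀ + 1) by ring]
        exact dvd_neg.mpr h1
      · refine ⟨1, by ring, ?_⟩
        have h1 := hprime.pow_dvd_of_dvd_mul_right m hd hprod
        simpa using h1
    have hdet1 : (σ • (1 : Matrix (Fin 2) (Fin 2) R)).det = 1 := by
      rw [Matrix.det_smul, Matrix.det_one, mul_one, Fintype.card_fin, pow_two, hσ2]
    have hdet2 : (σ • (g : Matrix (Fin 2) (Fin 2) R)).det = 1 := by
      rw [Matrix.det_smul, Fintype.card_fin, pow_two, hσ2, one_mul, g.prop]
    refine ⟨⟨σ • (1 : Matrix (Fin 2) (Fin 2) R), hdet1⟩, ⟨σ • (g : Matrix (Fin 2) (Fin 2) R), hdet2⟩, ?_, ?_, ?_⟩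
    · apply Subtype.ext
      show (g : Matrix (Fin 2) (Fin 2) R)
        = (σ • (1 : Matrix (Fin 2) (Fin 2) R)) * (σ • (g : Matrix (Fin 2) (Fin 2) R))
      rw [Matrix.smul_mul, Matrix.one_mul, smul_smul, hσ2, one_smul]
    · refine ⟨φ σ, 0, ?_, ?_⟩
      · have hφσ : φ σ ^ 2 = 1 := by rw [← map_pow, pow_two, hσ2, map_one]
        rw [hφσ]; ring
      · show Dp * ((σ • (1 : Matrix (Fin 2) (Fin 2) R)).map φ) * Dm = _
        rw [hsmulmap, Matrix.map_one φ (map_zero φ) (map_one φ),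
          Matrix.mul_smul, Matrix.smul_mul, Matrix.mul_one, hD]
        ext i j
        fin_cases i <;> fin_cases j <;> simp [Matrix.smul_apply, Matrix.one_apply]
    · refine ⟨⟨σ • (T₀ * (h : Matrix (Fin 2) (Fin 2) R)), ?_⟩, ?_, ?_⟩
      · rw [Matrix.det_smul, Fintype.card_fin, pow_two, hσ2, one_mul,
          Matrix.det_mul, hdetT₀, h.prop, one_mul]
      · intro i j
        show ϖ ^ m ∣ (σ • (T₀ * (h : Matrix (Fin 2) (Fin 2) R)) - 1) i j
        have hsplit : σ • (T₀ * (h : Matrix (Fin 2) (Fin 2) R)) - 1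
            = σ • (T₀ * ((h : Matrix (Fin 2) (Fin 2) R) - 1)) + (σ • T₀ - 1) := by
          rw [Matrix.mul_sub, Matrix.mul_one, smul_sub]
          abel
        rw [hsplit, Matrix.add_apply]
        refine dvd_add ?_ ?_
        · have hterm : ϖ ^ m ∣ (T₀ * ((h : Matrix (Fin 2) (Fin 2) R) - 1)) i j := by
            rw [Matrix.mul_apply]
            exact Finset.dvd_sum (fun l _ => (hh l j).mul_left (T₀ i l))
          simpa [Matrix.smul_apply, smul_eq_mul] using hterm.mul_left σ
        · have hsT : σ • T₀ - 1 = !![σ * a₀ - 1, σ * b₀; σ * (b₀ * ↑ε), σ * a₀ - 1] := by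
            rw [hT₀]
            ext i' j'
            fin_cases i' <;> fin_cases j' <;> simp [Matrix.one_apply]
          rw [hsT]
          fin_cases i <;> fin_cases j
          · simpa using hσa
          · simpa using hbm.mul_left σ
          · simpa using ((hbm.mul_right (↑ε : R)).mul_left σ)
          · simpa using hσa
      · show Dp * ((σ • (g : Matrix (Fin 2) (Fin 2) R)).map φ) * Dm
          = (σ • (T₀ * (h : Matrix (Fin 2) (Fin 2) R))).map φ
        rw [hsmulmap, hsmulmap, Matrix.mul_smul, Matrix.smul_mul, hEq, hM]
  · -- Case B : 2t < m, the torus part is already integral after conjugation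
    have hb2t : ϖ ^ (2*t) ∣ b₀ :=
      dvd_trans (pow_dvd_pow ϖ (by omega : 2*t ≤ min (2*t) m)) hmin
    obtain ⟨c, hc⟩ := hb2t
    have hdetg₁ : (!![a₀, c; ϖ ^ (2*t) * (b₀ * ↑ε), a₀] : Matrix (Fin 2) (Fin 2) R).det = 1 := by
      rw [Matrix.det_fin_two_of]
      linear_combination hab₀ + ((↑ε : R) * b₀) * hc
    obtain ⟨g₁, hg₁coe⟩ : ∃ gg : Matrix.SpecialLinearGroup (Fin 2) R,
        (gg : Matrix (Fin 2) (Fin 2) R) = !![a₀, c; ϖ ^ (2*t) * (b₀ * ↑ε), a₀] :=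
      ⟨⟨_, hdetg₁⟩, rfl⟩
    have hsand : ∀ M : Matrix (Fin 2) (Fin 2) k, Dp * M * Dm
        = !![M 0 0, π ^ (t:ℤ) * M 0 1 * π ^ (t:ℤ);
             π ^ (-(t:ℤ)) * M 1 0 * π ^ (-(t:ℤ)), M 1 1] := by
      intro M
      ext i j
      fin_cases i <;> fin_cases j <;>
        simp only [hDpd, hDmd, Matrix.mul_diagonal, Matrix.diagonal_mul,
          Fin.isValue, Matrix.cons_val_zero, Matrix.cons_val_one, Matrix.head_cons,
          Matrix.of_apply, Matrix.cons_val', Matrix.empty_val', Matrix.cons_val_fin_one,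
          Matrix.head_fin_const, Fin.mk_zero, Fin.mk_one]
      · linear_combination M 0 0 * hzc
      · linear_combination M 1 1 * hzc'
    have hTg₁ : Dp * ((g₁ : Matrix (Fin 2) (Fin 2) R)).map φ * Dm = tm := by
      rw [hg₁coe, htm, ha, hb, ← hφdef, hsand]
      have hmape : ∀ i j, ((!![a₀, c; ϖ ^ (2*t) * (b₀ * ↑ε), a₀]).map φ) i j
          = φ (!![a₀, c; ϖ ^ (2*t) * (b₀ * ↑ε), a₀] i j) := fun i j => rfl
      ext i j
      fin_cases i <;> fin_cases j <;>
        simp only [hmape, Fin.isValue, Matrix.cons_val_zero, Matrix.cons_val_one,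
          Matrix.head_cons, Matrix.of_apply, Matrix.cons_val', Matrix.empty_val',
          Matrix.cons_val_fin_one, Matrix.head_fin_const, Fin.mk_zero, Fin.mk_one]
      · have hb' : φ b₀ = π ^ (t:ℤ) * π ^ (t:ℤ) * φ c := by
          rw [hz2, ← map_mul, ← hc]
        linear_combination -hb'
      · rw [map_mul, map_mul, ← hz2]
        linear_combination (φ b₀ * φ (↑ε : R) * (π ^ (t:ℤ) * π ^ (-(t:ℤ)) + 1)) * hzc
    have hco : ∀ M N : Matrix (Fin 2) (Fin 2) k,
        (Dp * M * Dm) * (Dp * N * Dm) = Dp * (M * N) * Dm := by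
      intro M N
      have h1 : Dm * (Dp * (N * Dm)) = N * Dm := by
        rw [← Matrix.mul_assoc, hD', Matrix.one_mul]
      simp only [Matrix.mul_assoc]
      rw [h1]
    have hdettm : tm.det = 1 := by
      rw [htm, Matrix.det_fin_two_of]
      linear_combination hab
    obtain ⟨u, hu⟩ := (Matrix.isUnit_iff_isUnit_det tm).mpr (hdettm ▸ isUnit_one)
    have hxg₂ : Dp * (((g₁⁻¹ * g : Matrix.SpecialLinearGroup (Fin 2) R)
        : Matrix (Fin 2) (Fin 2) R)).map φ * Dm = x := by
      have hkey2 : tm * (Dp * (((g₁⁻¹ * g : Matrix.SpecialLinearGroup (Fin 2) R)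
          : Matrix (Fin 2) (Fin 2) R)).map φ * Dm) = tm * x := by
        calc tm * (Dp * (((g₁⁻¹ * g : Matrix.SpecialLinearGroup (Fin 2) R)
              : Matrix (Fin 2) (Fin 2) R)).map φ * Dm)
            = (Dp * ((g₁ : Matrix (Fin 2) (Fin 2) R)).map φ * Dm)
              * (Dp * (((g₁⁻¹ * g : Matrix.SpecialLinearGroup (Fin 2) R)
                : Matrix (Fin 2) (Fin 2) R)).map φ * Dm) := by rw [hTg₁]
          _ = Dp * (((g₁ : Matrix (Fin 2) (Fin 2) R)).map φ
              * (((g₁⁻¹ * g : Matrix.SpecialLinearGroup (Fin 2) R)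
                : Matrix (Fin 2) (Fin 2) R)).map φ) * Dm := hco _ _
          _ = Dp * (((g₁ * (g₁⁻¹ * g) : Matrix.SpecialLinearGroup (Fin 2) R)
                : Matrix (Fin 2) (Fin 2) R)).map φ * Dm := by
              rw [← Matrix.map_mul, ← Matrix.SpecialLinearGroup.coe_mul]
          _ = Dp * ((g : Matrix (Fin 2) (Fin 2) R)).map φ * Dm := by
              rw [mul_inv_cancel_left]
          _ = tm * x := hEq
      rw [← hu] at hkey2
      exact (Units.mul_right_inj u).mp hkey2
    exact ⟨g₁, g₁⁻¹ * g, (mul_inv_cancel_left g₁ g).symm,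
      ⟨a, b, hab, by rw [hTg₁, htm]⟩, ⟨h, hh, by rw [hxg₂, hx]⟩⟩
end

section
/- Let ε ∈ R^× be a unit whose image in κ is not a square, let T = { [[a, b],[bε, a]] : a, b ∈ k, a² − εb² = 1 } ⊆ SL₂(k), let t ≥ 1 and m ≥ 1 be integers with 2t ≥ m, and set α = diag(ϖ^{-t}, ϖ^{t}). Then { g ∈ SL₂(R) : α^{-1} g α ∈ T·K_m } = { z·h : z ∈ {I, −I}, h ∈ SL₂(R), α^{-1} h α ∈ K_m }; that is, K ∩ (T·K_m)^{α} = Z·(K ∩ K_m^{α}) where Z = {±I} and H^{α} = αHα^{-1}. -/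
private lemma conj_entries {k : Type*} [Field k] (π : k) (hπ : π ≠ 0) (t : ℕ)
    (M : Matrix (Fin 2) (Fin 2) k) :
    Matrix.diagonal ![π ^ (t:ℤ), π ^ (-(t:ℤ))] * M * Matrix.diagonal ![π ^ (-(t:ℤ)), π ^ (t:ℤ)] =
    !![M 0 0, π ^ (2*t) * M 0 1; (π ^ (2*t))⁻¹ * M 1 0, M 1 1] := by
  have h1 : π ^ (t:ℤ) = π ^ t := zpow_natCast π t
  have h2 : π ^ (-(t:ℤ)) = (π ^ t)⁻¹ := by rw [zpow_neg, h1]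
  have h3 : π ^ t ≠ 0 := pow_ne_zero _ hπ
  ext i j
  fin_cases i <;> fin_cases j <;>
    simp [Matrix.mul_apply, Fin.sum_univ_two, Matrix.diagonal, h1, h2, two_mul, pow_add,
      mul_inv] <;>
    (try field_simp) <;> (try ring)

private lemma dvd_mul_sub_one' {R : Type*} [CommRing R] {d : R} {A B : Matrix (Fin 2) (Fin 2) R}
    (hA : ∀ i j, d ∣ (A - 1) i j) (hB : ∀ i j, d ∣ (B - 1) i j) :
    ∀ i j, d ∣ (A * B - 1) i j := by
  have h : A * B - 1 = (A - 1) * (B - 1) + (A - 1) + (B - 1) := by noncomm_ring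
  intro i j
  rw [h]
  simp only [Matrix.add_apply, Matrix.mul_apply]
  exact dvd_add (dvd_add (Finset.dvd_sum fun _ _ => (hA _ _).mul_right _) (hA i j)) (hB i j)

private lemma two_unit (R : Type*) [CommRing R] [IsLocalRing R]
    [Finite (IsLocalRing.ResidueField R)]
    (hodd : Odd (Nat.card (IsLocalRing.ResidueField R))) : IsUnit (2 : R) := by
  by_contra h
  have hmem : (2 : R) ∈ IsLocalRing.maximalIdeal R := h
  have h2 : ((2 : ℕ) : IsLocalRing.ResidueField R) = 0 := by
    have : IsLocalRing.residue R (2 : R) = 0 := Ideal.Quotient.eq_zero_iff_mem.mpr hmem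
    simpa [map_ofNat] using this
  haveI : Fintype (IsLocalRing.ResidueField R) := Fintype.ofFinite _
  have hd : ringChar (IsLocalRing.ResidueField R) ∣ 2 := ringChar.dvd h2
  have hne1 : ringChar (IsLocalRing.ResidueField R) ≠ 1 := CharP.ringChar_ne_one
  have hchar : ringChar (IsLocalRing.ResidueField R) = 2 :=
    ((Nat.prime_two.eq_one_or_self_of_dvd _ hd).resolve_left hne1)
  haveI : CharP (IsLocalRing.ResidueField R) 2 := hchar ▸ ringChar.charP _
  obtain ⟨n, -, hcard⟩ := FiniteField.card (IsLocalRing.ResidueField R) 2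
  rw [Nat.card_eq_fintype_card, hcard] at hodd
  exact (Nat.not_even_iff_odd.mpr hodd)
    (Nat.even_pow.mpr ⟨even_iff_two_dvd.mpr dvd_rfl, n.pos.ne'⟩)

/-- With `α = diag(ϖ^{-t}, ϖ^{t})`, `T = T_{1,ε}` unramified and `2t ≥ m ≥ 1`:
`K ∩ (T·K_m)^α = Z · (K ∩ K_m^α)` where `Z = {±I}`. -/
theorem inter_conj_torus_congruence_eq_center_mul
    (R : Type*) [CommRing R] [IsDomain R] [IsDiscreteValuationRing R]
    [IsAdicComplete (IsLocalRing.maximalIdeal R) R]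
    [Finite (IsLocalRing.ResidueField R)]
    (hodd : Odd (Nat.card (IsLocalRing.ResidueField R)))
    (k : Type*) [Field k] [Algebra R k] [IsFractionRing R k]
    (ϖ : R) (hϖ : Irreducible ϖ)
    (ε : Rˣ) (hε : ¬ IsSquare (IsLocalRing.residue R (↑ε : R)))
    (t m : ℕ) (ht : 1 ≤ t) (hm : 1 ≤ m) (htm : m ≤ 2 * t) :
    {g : Matrix.SpecialLinearGroup (Fin 2) R |
      ∃ tm x : Matrix (Fin 2) (Fin 2) k,
        InUnramifiedTorus R k (↑ε) tm ∧ InCongruenceSubgroup R k ϖ m x ∧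
        Matrix.diagonal ![(algebraMap R k ϖ) ^ (t : ℤ), (algebraMap R k ϖ) ^ (-(t : ℤ))] *
            ((g : Matrix (Fin 2) (Fin 2) R).map (algebraMap R k)) *
            Matrix.diagonal ![(algebraMap R k ϖ) ^ (-(t : ℤ)), (algebraMap R k ϖ) ^ (t : ℤ)] =
          tm * x} =
    {g : Matrix.SpecialLinearGroup (Fin 2) R |
      ∃ z h : Matrix.SpecialLinearGroup (Fin 2) R,
        ((z : Matrix (Fin 2) (Fin 2) R) = 1 ∨ (z : Matrix (Fin 2) (Fin 2) R) = -1) ∧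
        InCongruenceSubgroup R k ϖ m
          (Matrix.diagonal ![(algebraMap R k ϖ) ^ (t : ℤ), (algebraMap R k ϖ) ^ (-(t : ℤ))] *
            ((h : Matrix (Fin 2) (Fin 2) R).map (algebraMap R k)) *
            Matrix.diagonal ![(algebraMap R k ϖ) ^ (-(t : ℤ)), (algebraMap R k ϖ) ^ (t : ℤ)]) ∧
        g = z * h} := by
  classical
  have hinj : Function.Injective (algebraMap R k) := IsFractionRing.injective R k
  have hπ0 : ϖ ≠ 0 := hϖ.ne_zero
  have hπk : algebraMap R k ϖ ≠ 0 := by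
    intro h; exact hπ0 (hinj (by simpa using h))
  have hneg1 : (-1 : Matrix (Fin 2) (Fin 2) k) = !![-1, 0; 0, -1] := by
    ext i j; fin_cases i <;> fin_cases j <;> simp [Matrix.one_apply]
  ext g
  simp only [Set.mem_setOf_eq]
  constructor
  · rintro ⟨tm, x, ⟨a, b, hab, rfl⟩, ⟨h', hh', rfl⟩, heq⟩
    have heq0 := heq
    rw [conj_entries (algebraMap R k ϖ) hπk t] at heq
    have e := fun i j => congrFun (congrFun heq i) j
    have e00 := e 0 0
    have e01 := e 0 1
    have e10 := e 1 0
    have e11 := e 1 1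
    simp only [Matrix.mul_apply, Fin.sum_univ_two, Matrix.map_apply, Matrix.cons_val',
      Matrix.cons_val_zero, Matrix.cons_val_one, Matrix.head_cons, Matrix.head_fin_const,
      Matrix.empty_val', Matrix.cons_val_fin_one, Matrix.of_apply] at e00 e01 e10 e11
    -- determinant of h' mapped to k
    have hdetR : (h' : Matrix (Fin 2) (Fin 2) R) 0 0 * (h' : Matrix (Fin 2) (Fin 2) R) 1 1
        - (h' : Matrix (Fin 2) (Fin 2) R) 0 1 * (h' : Matrix (Fin 2) (Fin 2) R) 1 0 = 1 := by
      have := h'.prop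
      rwa [Matrix.det_fin_two] at this
    have hdetk : algebraMap R k ((h' : Matrix (Fin 2) (Fin 2) R) 0 0) *
        algebraMap R k ((h' : Matrix (Fin 2) (Fin 2) R) 1 1) -
        algebraMap R k ((h' : Matrix (Fin 2) (Fin 2) R) 0 1) *
        algebraMap R k ((h' : Matrix (Fin 2) (Fin 2) R) 1 0) = 1 := by
      have := congrArg (algebraMap R k) hdetR
      simpa [map_sub, map_mul] using this
    set G : Matrix (Fin 2) (Fin 2) R := (g : Matrix (Fin 2) (Fin 2) R) with hG
    set H : Matrix (Fin 2) (Fin 2) R := (h' : Matrix (Fin 2) (Fin 2) R) with hH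
    set a' : R := G 0 0 * H 1 1 - ϖ ^ (2*t) * (G 0 1 * H 1 0) with ha'
    set b' : R := ϖ ^ (2*t) * (G 0 1 * H 0 0) - G 0 0 * H 0 1 with hb'
    have hfa : algebraMap R k a' = a := by
      rw [ha']
      simp only [map_sub, map_mul, map_pow]
      linear_combination e00 * algebraMap R k (H 1 1) - e01 * algebraMap R k (H 1 0)
        + a * hdetk
    have hfb : algebraMap R k b' = b := by
      rw [hb']
      simp only [map_sub, map_mul, map_pow]
      linear_combination e01 * algebraMap R k (H 0 0) - e00 * algebraMap R k (H 0 1)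
        + b * hdetk
    have habR : a' ^ 2 - (↑ε : R) * b' ^ 2 = 1 := by
      apply hinj
      rw [map_sub, map_pow, map_mul, map_pow, hfa, hfb, map_one]
      exact hab
    have hbm : ϖ ^ m ∣ b' := by
      have h1 : ϖ ^ m ∣ H 0 1 := by
        have := hh' 0 1
        simpa [Matrix.sub_apply, Matrix.one_apply] using this
      have h2 : ϖ ^ m ∣ ϖ ^ (2*t) := pow_dvd_pow _ htm
      exact dvd_sub (h2.mul_right _) (h1.mul_left _)
    have hsq : ϖ ^ (2*m) ∣ (a' - 1) * (a' + 1) := by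
      obtain ⟨c, hc⟩ := hbm
      refine ⟨(↑ε : R) * c ^ 2, ?_⟩
      rw [two_mul, pow_add]
      rw [hc] at habR
      linear_combination habR
    have hunit : IsUnit (a' - 1) ∨ IsUnit (a' + 1) := by
      by_contra hcon
      push_neg at hcon
      have m1 : a' - 1 ∈ IsLocalRing.maximalIdeal R :=
        (IsLocalRing.mem_maximalIdeal _).mpr (mem_nonunits_iff.mpr hcon.1)
      have m2 : a' + 1 ∈ IsLocalRing.maximalIdeal R :=
        (IsLocalRing.mem_maximalIdeal _).mpr (mem_nonunits_iff.mpr hcon.2)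
      have hsub : (a' + 1) - (a' - 1) = 2 := by ring
      have h2m : (2 : R) ∈ IsLocalRing.maximalIdeal R := hsub ▸ Ideal.sub_mem _ m2 m1
      exact mem_nonunits_iff.mp ((IsLocalRing.mem_maximalIdeal _).mp h2m) (two_unit R hodd)
    obtain ⟨s, hs, hdvd⟩ : ∃ s : R, (s = 1 ∨ s = -1) ∧ ϖ ^ (2*m) ∣ (a' - s) := by
      rcases hunit with hu | hu
      · refine ⟨-1, Or.inr rfl, ?_⟩
        rw [sub_neg_eq_add]
        exact hu.dvd_mul_left.mp hsq
      · refine ⟨1, Or.inl rfl, ?_⟩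
        exact hu.dvd_mul_right.mp hsq
    have hs2 : s * s = 1 := by rcases hs with rfl | rfl <;> ring
    have hdvdm : ϖ ^ m ∣ (a' - s) := (pow_dvd_pow _ (by omega : m ≤ 2*m)).trans hdvd
    -- construct z and N
    have zdet : Matrix.det !![s, 0; 0, s] = 1 := by
      simp [Matrix.det_fin_two_of, hs2]
    set N : Matrix (Fin 2) (Fin 2) R := !![s * a', s * b'; s * (b' * (↑ε : R)), s * a']
      with hN
    have Ndet : Matrix.det N = 1 := by
      rw [hN, Matrix.det_fin_two_of]
      linear_combination (s*s) * habR + hs2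
    set z : Matrix.SpecialLinearGroup (Fin 2) R := ⟨!![s, 0; 0, s], zdet⟩ with hz
    have hzz : z * z = 1 := by
      apply Subtype.ext
      show (!![s, 0; 0, s] * !![s, 0; 0, s] : Matrix (Fin 2) (Fin 2) R) = 1
      ext i j
      fin_cases i <;> fin_cases j <;>
        simp [Matrix.mul_apply, Fin.sum_univ_two, Matrix.one_apply, hs2]
    refine ⟨z, z * g, ?_, ?_, ?_⟩
    · rcases hs with rfl | rfl
      · left
        show !![(1:R), 0; 0, 1] = 1
        ext i j; fin_cases i <;> fin_cases j <;> simp [Matrix.one_apply]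
      · right
        show !![(-1:R), 0; 0, -1] = -1
        ext i j; fin_cases i <;> fin_cases j <;> simp [Matrix.one_apply]
    · -- congruence subgroup membership of conj(z*g)
      refine ⟨⟨N * H, by rw [Matrix.det_mul, Ndet, one_mul]; exact h'.prop⟩, ?_, ?_⟩
      · apply dvd_mul_sub_one'
        · have hN1m : N - 1 = !![s * a' - 1, s * b'; s * (b' * (↑ε:R)), s * a' - 1] := by
            rw [hN]
            ext i j
            fin_cases i <;> fin_cases j <;> simp [Matrix.one_apply]
          have key : s * a' - 1 = s * (a' - s) := by linear_combination hs2
          have k1 : ϖ ^ m ∣ s * a' - 1 := by rw [key]; exact hdvdm.mul_left s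
          have k2 : ϖ ^ m ∣ s * b' := hbm.mul_left s
          have k3 : ϖ ^ m ∣ s * (b' * (↑ε:R)) := ((hbm.mul_right _).mul_left s)
          intro i j
          rw [hN1m]
          fin_cases i <;> fin_cases j <;>
            simpa using (by first | exact k1 | exact k2 | exact k3 : ϖ ^ m ∣ _)
        · exact hh'
      · -- map equality
        have step1 : ((z * g : Matrix.SpecialLinearGroup (Fin 2) R) :
            Matrix (Fin 2) (Fin 2) R) = s • G := by
          rw [Matrix.SpecialLinearGroup.coe_mul]
          ext i j
          fin_cases i <;> fin_cases j <;>
            simp [hz, hG, Matrix.mul_apply, Fin.sum_univ_two]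
        have step2 : ((s • G).map (algebraMap R k)) =
            algebraMap R k s • (G.map (algebraMap R k)) := by
          ext i j
          simp [Matrix.map_apply, Matrix.smul_apply, smul_eq_mul, map_mul]
        have hNmap : N.map (algebraMap R k) =
            algebraMap R k s • !![a, b; b * algebraMap R k (↑ε:R), a] := by
          rw [hN]
          ext i j
          fin_cases i <;> fin_cases j <;>
            simp [Matrix.map_apply, Matrix.smul_apply, smul_eq_mul, map_mul, hfa, hfb]
        have hmapmul : ((N * H).map (algebraMap R k)) =
            N.map (algebraMap R k) * H.map (algebraMap R k) :=
          Matrix.map_mul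
        show _ = (N * H).map (algebraMap R k)
        rw [step1, step2, Matrix.mul_smul, Matrix.smul_mul, heq0, hmapmul, hNmap,
          Matrix.smul_mul]
    · -- g = z * (z * g)
      rw [← mul_assoc, hzz, one_mul]
  · rintro ⟨z, h, hz, ⟨h', hh', hmap⟩, rfl⟩
    rcases hz with h1 | h1
    · refine ⟨!![1, 0; 0, 1], _, ⟨1, 0, by simp, by simp⟩, ⟨h', hh', hmap⟩, ?_⟩
      have : ((z * h : Matrix.SpecialLinearGroup (Fin 2) R) : Matrix (Fin 2) (Fin 2) R)
          = (h : Matrix (Fin 2) (Fin 2) R) := by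
        rw [Matrix.SpecialLinearGroup.coe_mul, h1, one_mul]
      rw [this, ← Matrix.one_fin_two, one_mul]
    · refine ⟨!![-1, 0; 0, -1], _, ⟨-1, 0, by simp, by simp [hneg1]⟩, ⟨h', hh', hmap⟩, ?_⟩
      have : ((z * h : Matrix.SpecialLinearGroup (Fin 2) R) : Matrix (Fin 2) (Fin 2) R)
          = -(h : Matrix (Fin 2) (Fin 2) R) := by
        rw [Matrix.SpecialLinearGroup.coe_mul, h1, neg_one_mul]
      have hmapneg : ((-(h : Matrix (Fin 2) (Fin 2) R)).map (algebraMap R k))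
          = -((h : Matrix (Fin 2) (Fin 2) R).map (algebraMap R k)) := by
        ext i j; simp [Matrix.map_apply]
      rw [this, hmapneg, ← hneg1]
      simp [Matrix.mul_neg, Matrix.neg_mul]
end

section
/- Every normal subgroup of SL₂(R) containing the set U^op = { [[1, 0],[c, 1]] : c ∈ R^× } of lower unipotent matrices with unit entry is equal to SL₂(R); that is, U^op is contained in no proper normal subgroup of SL₂(R). -/
open Matrix

namespace SL2Aux

variable {R : Type*} [CommRing R]

/-- Lower unipotent matrix in `SL₂`. -/
def elemL (c : R) : Matrix.SpecialLinearGroup (Fin 2) R :=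
  ⟨!![1, 0; c, 1], by simp [Matrix.det_fin_two_of]⟩

/-- Upper unipotent matrix in `SL₂`. -/
def elemU (c : R) : Matrix.SpecialLinearGroup (Fin 2) R :=
  ⟨!![1, c; 0, 1], by simp [Matrix.det_fin_two_of]⟩

/-- The Weyl element. -/
def elemW : Matrix.SpecialLinearGroup (Fin 2) R :=
  ⟨!![0, 1; -1, 0], by simp [Matrix.det_fin_two_of]⟩

lemma elemL_mul (a b : R) : elemL a * elemL b = elemL (a + b) := by
  apply Subtype.ext
  rw [Matrix.SpecialLinearGroup.coe_mul]
  simp [elemL, Matrix.SpecialLinearGroup.coe_mul, Matrix.mul_fin_two]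

lemma elemU_eq_conj (c : R) :
    elemU c = elemW * elemL (-c) * elemW⁻¹ := by
  rw [eq_mul_inv_iff_mul_eq]
  apply Subtype.ext
  rw [Matrix.SpecialLinearGroup.coe_mul, Matrix.SpecialLinearGroup.coe_mul]
  simp [elemU, elemL, elemW, Matrix.SpecialLinearGroup.coe_mul, Matrix.mul_fin_two]

end SL2Aux

open SL2Aux in
/-- The set `U^op = { [[1,0],[c,1]] : c ∈ R^× }` of lower unipotent matrices with unit
entry is contained in no proper normal subgroup of `SL₂(R)`: any normal subgroup
containing it is all of `SL₂(R)`. -/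
theorem normal_subgroup_containing_unipotents_eq_top
    (R : Type*) [CommRing R] [IsDomain R] [IsDiscreteValuationRing R]
    [IsAdicComplete (IsLocalRing.maximalIdeal R) R]
    [Finite (IsLocalRing.ResidueField R)]
    (hodd : Odd (Nat.card (IsLocalRing.ResidueField R)))
    (N : Subgroup (Matrix.SpecialLinearGroup (Fin 2) R)) (hN : N.Normal)
    (hU : ∀ (c : Rˣ) (g : Matrix.SpecialLinearGroup (Fin 2) R),
      (g : Matrix (Fin 2) (Fin 2) R) = !![1, 0; (↑c : R), 1] → g ∈ N) :
    N = ⊤ := by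
  -- `2` is a unit in `R` since the residue field has odd cardinality.
  have h2 : IsUnit (2 : R) := by
    by_contra h2
    have hmem : (2 : R) ∈ IsLocalRing.maximalIdeal R := by
      simpa [IsLocalRing.mem_maximalIdeal, mem_nonunits_iff] using h2
    have hres : ((2 : ℕ) : IsLocalRing.ResidueField R) = 0 := by
      have := (IsLocalRing.residue_eq_zero_iff (2 : R)).mpr hmem
      rw [map_ofNat] at this
      exact_mod_cast this
    have hdvd : ringChar (IsLocalRing.ResidueField R) ∣ 2 :=
      (ringChar.spec (IsLocalRing.ResidueField R) 2).mp hres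
    have hne1 : ringChar (IsLocalRing.ResidueField R) ≠ 1 :=
      CharP.ringChar_ne_one
    have hne0 : ringChar (IsLocalRing.ResidueField R) ≠ 0 := by
      intro h; rw [h] at hdvd; exact absurd (Nat.eq_zero_of_zero_dvd hdvd) (by norm_num)
    have hchar : ringChar (IsLocalRing.ResidueField R) = 2 := by
      rcases (Nat.dvd_prime Nat.prime_two).mp hdvd with h | h
      · exact absurd h hne1
      · exact h
    have : Fintype (IsLocalRing.ResidueField R) := Fintype.ofFinite _
    have heven := FiniteField.even_card_of_char_two hchar
    rw [Nat.card_eq_fintype_card, Nat.odd_iff] at hodd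
    omega
  -- unit-entry lower unipotents are in `N`
  have hLu : ∀ c : R, IsUnit c → elemL c ∈ N := by
    rintro c ⟨u, rfl⟩
    exact hU u _ rfl
  -- all lower unipotents are in `N`
  have hL : ∀ c : R, elemL c ∈ N := by
    intro c
    by_cases hc : IsUnit c
    · obtain ⟨v, hv⟩ := h2
      have h1 : c = c * ↑v⁻¹ + c * ↑v⁻¹ := by
        have h2' : c * ↑v⁻¹ + c * ↑v⁻¹ = c * (↑v⁻¹ * (2 : R)) := by ring
        rw [h2', ← hv, v.inv_mul, mul_one]
      rw [h1, ← elemL_mul]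
      exact mul_mem (hLu _ (hc.mul v⁻¹.isUnit)) (hLu _ (hc.mul v⁻¹.isUnit))
    · have hc1 : IsUnit (c - 1) := by
        rcases IsLocalRing.isUnit_or_isUnit_of_isUnit_add
            (a := c) (b := (1 : R) - c) (by simp) with h | h
        · exact absurd h hc
        · simpa using h.neg
      have hsplit : c = 1 + (c - 1) := by ring
      rw [hsplit, ← elemL_mul]
      exact mul_mem (hLu _ isUnit_one) (hLu _ hc1)
  -- all upper unipotents are in `N`
  have hUp : ∀ c : R, elemU c ∈ N := by
    intro c
    rw [elemU_eq_conj]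
    exact Subgroup.Normal.conj_mem hN _ (hL _) _
  -- matrices with unit lower-left entry are in `N`
  have hcase1 : ∀ g : Matrix.SpecialLinearGroup (Fin 2) R,
      IsUnit ((g : Matrix (Fin 2) (Fin 2) R) 1 0) → g ∈ N := by
    intro g hg
    obtain ⟨v, hv⟩ := hg
    set a := (g : Matrix (Fin 2) (Fin 2) R) 0 0 with ha
    set b := (g : Matrix (Fin 2) (Fin 2) R) 0 1 with hb
    set c := (g : Matrix (Fin 2) (Fin 2) R) 1 0 with hc
    set d := (g : Matrix (Fin 2) (Fin 2) R) 1 1 with hd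
    have hdet : a * d - b * c = 1 := by
      have h := g.2
      rw [Matrix.det_fin_two] at h
      exact h
    have hvc : (↑v⁻¹ : R) * c = 1 := by
      rw [← hv]; exact v.inv_mul
    set t := (1 - a) * (↑v⁻¹ : R) with ht
    set s := b + t * d with hs
    have key : elemU t * g = elemL c * elemU s := by
      apply Subtype.ext
      have hg2 : (g : Matrix (Fin 2) (Fin 2) R) = !![a, b; c, d] := Matrix.eta_fin_two _
      rw [Matrix.SpecialLinearGroup.coe_mul, Matrix.SpecialLinearGroup.coe_mul, hg2]
      show (!![1, t; 0, 1] * !![a, b; c, d] : Matrix (Fin 2) (Fin 2) R) =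
        !![1, 0; c, 1] * !![1, s; 0, 1]
      rw [Matrix.mul_fin_two, Matrix.mul_fin_two]
      ext i j
      fin_cases i <;> fin_cases j
      · simp
        simp only [ht, hs]
        linear_combination (1 - a) * hvc
      · simp [ht, hs]
      · simp [ht, hs]
      · simp
        simp only [ht, hs]
        linear_combination hdet - (1 - a) * d * hvc
    have hgeq : g = (elemU t)⁻¹ * (elemL c * elemU s) := by
      rw [← key]; group
    rw [hgeq]
    exact mul_mem (inv_mem (hUp _)) (mul_mem (hL _) (hUp _))
  -- main argument
  rw [Subgroup.eq_top_iff']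
  intro g
  set a := (g : Matrix (Fin 2) (Fin 2) R) 0 0 with ha
  set b := (g : Matrix (Fin 2) (Fin 2) R) 0 1 with hb
  set c := (g : Matrix (Fin 2) (Fin 2) R) 1 0 with hc
  set d := (g : Matrix (Fin 2) (Fin 2) R) 1 1 with hd
  have hdet : a * d - b * c = 1 := by
    have h := g.2
    rw [Matrix.det_fin_two] at h
    exact h
  have hac : IsUnit a ∨ IsUnit c := by
    have hiu : IsUnit (a * d + (-(b * c))) := by
      rw [← sub_eq_add_neg, hdet]; exact isUnit_one
    rcases IsLocalRing.isUnit_or_isUnit_of_isUnit_add hiu with h | h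
    · exact Or.inl (isUnit_of_mul_isUnit_left h)
    · have h' : IsUnit (b * c) := by simpa using h.neg
      exact Or.inr (isUnit_of_mul_isUnit_right h')
  rcases hac with h | h
  · obtain ⟨u, hu⟩ := h
    have hua : (↑u⁻¹ : R) * a = 1 := by rw [← hu]; exact u.inv_mul
    set s := (1 - c) * (↑u⁻¹ : R) with hsdef
    have hent : ((elemL s * g : Matrix.SpecialLinearGroup (Fin 2) R) :
        Matrix (Fin 2) (Fin 2) R) 1 0 = 1 := by
      rw [Matrix.SpecialLinearGroup.coe_mul]
      rw [show ((g : Matrix (Fin 2) (Fin 2) R)) = !![a, b; c, d] from Matrix.eta_fin_two _]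
      show (!![1, 0; s, 1] * !![a, b; c, d] : Matrix (Fin 2) (Fin 2) R) 1 0 = 1
      rw [Matrix.mul_fin_two]
      simp
      simp only [hsdef]
      linear_combination (1 - c) * hua
    have h1 : elemL s * g ∈ N := hcase1 _ (by rw [hent]; exact isUnit_one)
    have hrew : g = (elemL s)⁻¹ * (elemL s * g) := by group
    rw [hrew]
    exact mul_mem (inv_mem (hL _)) h1
  · exact hcase1 g h
end

section
/- Let u, u' ∈ k^× and v, v' ∈ k with δ = u^{-1}v ∈ P and δ' = u'^{-1}v' ∈ P, and suppose δ ≠ δ' with n = val(δ − δ') ≥ 1. Let b ∈ R and let a, a' ∈ R satisfy a² = 1 + b²δ, a'² = 1 + b²δ', and a ≡ a' mod P. Then the matrices t = [[a, b],[bδ, a]] and t' = [[a', b],[bδ', a']] lie in SL₂(R), and t^{-1}·t' ≡ I mod P^{n} (i.e., t^{-1}t' lies in the principal congruence subgroup K_n). -/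
/-- Transfer congruence: with `δ = u⁻¹v, δ' = u'⁻¹v' ∈ P`, `n = val(δ − δ') ≥ 1`,
`a² = 1 + b²δ`, `a'² = 1 + b²δ'` and `a ≡ a' mod P`, the matrices
`t = [[a,b],[bδ,a]]` and `t' = [[a',b],[bδ',a']]` lie in `SL₂(R)` and
`t⁻¹·t' ≡ I mod P^n`. -/
theorem transfer_congruence
    (R : Type*) [CommRing R] [IsDomain R] [IsDiscreteValuationRing R]
    [IsAdicComplete (IsLocalRing.maximalIdeal R) R]
    [Finite (IsLocalRing.ResidueField R)]
    (hodd : Odd (Nat.card (IsLocalRing.ResidueField R)))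
    (k : Type*) [Field k] [Algebra R k] [IsFractionRing R k]
    (ϖ : R) (hϖ : Irreducible ϖ)
    (u u' : k) (hu : u ≠ 0) (hu' : u' ≠ 0) (v v' : k)
    (δ δ' : R) (hδmem : δ ∈ IsLocalRing.maximalIdeal R)
    (hδ'mem : δ' ∈ IsLocalRing.maximalIdeal R)
    (hδ : algebraMap R k δ = u⁻¹ * v) (hδ' : algebraMap R k δ' = u'⁻¹ * v')
    (hne : δ ≠ δ') (n : ℕ) (hn : 1 ≤ n) (wn : Rˣ) (hval : δ - δ' = ϖ ^ n * (↑wn : R))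
    (a a' b : R) (ha : a ^ 2 = 1 + b ^ 2 * δ) (ha' : a' ^ 2 = 1 + b ^ 2 * δ')
    (hcong : ϖ ∣ (a - a')) :
    (!![a, b; b * δ, a] : Matrix (Fin 2) (Fin 2) R).det = 1 ∧
    (!![a', b; b * δ', a'] : Matrix (Fin 2) (Fin 2) R).det = 1 ∧
    (∀ i j, ϖ ^ n ∣
      (((!![a, b; b * δ, a] : Matrix (Fin 2) (Fin 2) R))⁻¹ *
        (!![a', b; b * δ', a'] : Matrix (Fin 2) (Fin 2) R) - 1) i j) := by
  -- maximal ideal is generated by ϖ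
  have hmax : IsLocalRing.maximalIdeal R = Ideal.span {ϖ} :=
    (IsDiscreteValuationRing.irreducible_iff_uniformizer ϖ).mp hϖ
  have hδdvd : ϖ ∣ δ := Ideal.mem_span_singleton.mp (hmax ▸ hδmem)
  have hδ'dvd : ϖ ∣ δ' := Ideal.mem_span_singleton.mp (hmax ▸ hδ'mem)
  -- a unit criterion
  have hunit_of : ∀ x : R, ¬ ϖ ∣ x → IsUnit x := by
    intro x hx
    by_contra hxu
    exact hx (Ideal.mem_span_singleton.mp
      (hmax ▸ (IsLocalRing.mem_maximalIdeal x).mpr (mem_nonunits_iff.mpr hxu)))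
  -- 2 is a unit
  have h2 : ¬ ϖ ∣ (2 : R) := by
    intro h
    set κ := IsLocalRing.ResidueField R
    have h2κ : (2 : κ) = 0 := by
      have : (2 : R) ∈ IsLocalRing.maximalIdeal R := by
        rw [hmax]; exact Ideal.mem_span_singleton.mpr h
      have := (IsLocalRing.residue_eq_zero_iff (2 : R)).mpr this
      simpa [map_ofNat] using this
    have hdvd2 : addOrderOf (1 : κ) ∣ 2 := by
      rw [addOrderOf_dvd_iff_nsmul_eq_zero]
      have : ((2 : ℕ) : κ) = 0 := by exact_mod_cast h2κ
      simpa [nsmul_eq_mul] using this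
    have hodd' : Odd (addOrderOf (1 : κ)) :=
      hodd.of_dvd_nat (addOrderOf_dvd_natCard (1 : κ))
    have hle : addOrderOf (1 : κ) ≤ 2 := Nat.le_of_dvd two_pos hdvd2
    have h1 : addOrderOf (1 : κ) = 1 := by
      have := Nat.odd_iff.mp hodd'
      interval_cases h : addOrderOf (1 : κ) <;> omega
    exact one_ne_zero (AddMonoid.addOrderOf_eq_one_iff.mp h1)
  -- a is a unit
  have hadvd : ¬ ϖ ∣ a := by
    intro hdvd
    have : ϖ ∣ (1 : R) := by
      have h1 : ϖ ∣ a ^ 2 := hdvd.pow two_ne_zero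
      have : ϖ ∣ b ^ 2 * δ := hδdvd.mul_left _
      exact (dvd_add_right this).mp (by rwa [ha, add_comm] at h1)
    exact hϖ.not_isUnit (isUnit_of_dvd_one this)
  -- a + a' is a unit
  have hsum : IsUnit (a + a') := by
    apply hunit_of
    intro hdvd
    have h2a : ϖ ∣ 2 * a := by
      have : (2 : R) * a = (a + a') + (a - a') := by ring
      rw [this]; exact dvd_add hdvd hcong
    rcases (hϖ.prime.dvd_mul).mp h2a with h | h
    · exact h2 h
    · exact hadvd h
  -- key divisibility : ϖ^n ∣ a - a'
  have hkey : ϖ ^ n ∣ a - a' := by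
    obtain ⟨s, hs⟩ := hsum
    refine ⟨b ^ 2 * ↑wn * ↑s⁻¹, ?_⟩
    have hprod : (a - a') * (a + a') = ϖ ^ n * (b ^ 2 * ↑wn) := by
      have : (a - a') * (a + a') = a ^ 2 - a' ^ 2 := by ring
      rw [this, ha, ha']
      rw [show (1 : R) + b ^ 2 * δ - (1 + b ^ 2 * δ') = b ^ 2 * (δ - δ') by ring,
        hval]; ring
    have hcancel : (a + a') * (↑s⁻¹ : R) = 1 := by
      rw [← hs, ← Units.val_mul, mul_inv_cancel, Units.val_one]
    calc a - a' = (a - a') * ((a + a') * ↑s⁻¹) := by rw [hcancel, mul_one]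
      _ = ((a - a') * (a + a')) * ↑s⁻¹ := by ring
      _ = ϖ ^ n * (b ^ 2 * ↑wn) * ↑s⁻¹ := by rw [hprod]
      _ = ϖ ^ n * (b ^ 2 * ↑wn * ↑s⁻¹) := by ring
  have hdet : (!![a, b; b * δ, a] : Matrix (Fin 2) (Fin 2) R).det = 1 := by
    simp [Matrix.det_fin_two_of]
    linear_combination ha
  have hdet' : (!![a', b; b * δ', a'] : Matrix (Fin 2) (Fin 2) R).det = 1 := by
    simp [Matrix.det_fin_two_of]
    linear_combination ha'
  refine ⟨hdet, hdet', ?_⟩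
  have hinv : (!![a, b; b * δ, a] : Matrix (Fin 2) (Fin 2) R)⁻¹ =
      !![a, -b; -(b * δ), a] := by
    rw [Matrix.inv_def, hdet, Matrix.adjugate_fin_two]
    simp
  intro i j
  rw [hinv]
  obtain ⟨c, hc⟩ := hkey
  fin_cases i <;> fin_cases j <;>
    simp [Matrix.mul_apply, Fin.sum_univ_two, Matrix.one_apply]
  · exact ⟨a' * c, by linear_combination a' * hc + ha'⟩
  · exact ⟨b * c, by linear_combination b * hc⟩
  · exact ⟨b * (δ' * c - a' * ↑wn), by linear_combination b * δ' * hc - a' * b * hval⟩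
  · exact ⟨a * (-c), by linear_combination (-a) * hc + ha⟩
end
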